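/- arXiv:1511.08139 — 2 statements merged into one kernel-verified Lean document; each statement's English description precedes it below -/
import Mathlib

section
/- Let (G,N) be a pair of finite groups, K a central subgroup of G contained in N, and T = π⁻¹(K). Then the index of [K,_cG] in K ∩ [N,_cG], multiplied by the order of M^{(c)}(G,N), divides |M^{(c)}(G/K,N/K)| · |⊗^{c+1}(K, G/K)| · |([R,_cF]·∏_{i=2}^{c+1} γ_{c+1}(T,F)_i) / [R,_cF]|. -/
open Subgroup

/-- `itComm X Y c` is the `c`-fold iterated commutator subgroup
`[X,_c Y] = ⁅…⁅⁅X,Y⁆,Y⁆,…,Y⁆` (with `c` copies of `Y`); `itComm X Y 0 = X`. -/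
def itComm {P : Type*} [Group P] (X Y : Subgroup P) : ℕ → Subgroup P
  | 0 => X
  | c + 1 => ⁅itComm X Y c, Y⁆

instance itComm_normal {P : Type*} [Group P] (X Y : Subgroup P) [hX : X.Normal] [hY : Y.Normal]
    (c : ℕ) : (itComm X Y c).Normal := by
  induction c with
  | zero => exact hX
  | succ c ih => exact Subgroup.commutator_normal _ _

/-- The abelianization of a group, written additively. -/
abbrev AbOf (A : Type) [Group A] : Type := Additive (Abelianization A)

/-- Iterated tensor product `M ⊗ B ⊗ ⋯ ⊗ B` (with `c` factors `B`) of `ℤ`-modules. -/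
noncomputable def iterTensor (M B : ModuleCat ℤ) : ℕ → ModuleCat ℤ
  | 0 => M
  | c + 1 => ModuleCat.of ℤ (TensorProduct ℤ (iterTensor M B c) B)

/-- `⊗^{c+1}(A, B) = A^{ab} ⊗_ℤ B^{ab} ⊗_ℤ ⋯ ⊗_ℤ B^{ab}` with `c` factors `B^{ab}`. -/
noncomputable def tensorPair (A B : Type) [Group A] [Group B] (c : ℕ) : ModuleCat ℤ :=
  iterTensor (ModuleCat.of ℤ (AbOf A)) (ModuleCat.of ℤ (AbOf B)) c

/-- `M^{(c)}(G,N) = (R ∩ [S,_c F]) / [R,_c F]`, where `R = ker π` and `S = π⁻¹(N)`,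
relative to the free presentation `π : F ↠ G`. -/
def McPair {F G : Type} [Group F] [Group G] (π : F →* G) (N : Subgroup G) (c : ℕ) : Type :=
  (π.ker ⊓ itComm (N.comap π) ⊤ c : Subgroup F) ⧸
    (itComm π.ker ⊤ c).subgroupOf (π.ker ⊓ itComm (N.comap π) ⊤ c)

noncomputable instance {F G : Type} [Group F] [Group G] (π : F →* G) (N : Subgroup G) (c : ℕ) :
    Group (McPair π N c) :=
  inferInstanceAs (Group ((π.ker ⊓ itComm (N.comap π) ⊤ c : Subgroup F) ⧸
    (itComm π.ker ⊤ c).subgroupOf (π.ker ⊓ itComm (N.comap π) ⊤ c)))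

/-- `M^{(c)}(G/K, N/K) = (T ∩ [S,_c F]) / [T,_c F]`, where `T = π⁻¹(K)` and `S = π⁻¹(N)`,
relative to the free presentation `π : F ↠ G`. -/
def McPairQuot {F G : Type} [Group F] [Group G] (π : F →* G) (N K : Subgroup G) (c : ℕ) :
    Type :=
  (K.comap π ⊓ itComm (N.comap π) ⊤ c : Subgroup F) ⧸
    (itComm (K.comap π) ⊤ c).subgroupOf (K.comap π ⊓ itComm (N.comap π) ⊤ c)

noncomputable instance {F G : Type} [Group F] [Group G] (π : F →* G) (N K : Subgroup G)
    [K.Normal] (c : ℕ) : Group (McPairQuot π N K c) :=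
  inferInstanceAs (Group ((K.comap π ⊓ itComm (N.comap π) ⊤ c : Subgroup F) ⧸
    (itComm (K.comap π) ⊤ c).subgroupOf (K.comap π ⊓ itComm (N.comap π) ⊤ c)))

/-- `gammaMixed T c i` is the left-normed multiple commutator subgroup
`γ_{c+1}(T,F)_i = [D_1,D_2,…,D_{c+1}]` with `D_1 = D_i = T` and `D_j = F` (i.e. `⊤`)
for `j ≠ 1, i`. -/
def gammaMixed {P : Type*} [Group P] (T : Subgroup P) (c i : ℕ) : Subgroup P :=
  (List.range c).foldl (fun A j => ⁅A, if j + 2 = i then T else ⊤⁆) T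

private theorem foldl_comm_normal {P : Type*} [Group P] (T : Subgroup P) [hT : T.Normal]
    (i : ℕ) : ∀ (L : List ℕ) (A : Subgroup P), A.Normal →
      (L.foldl (fun A j => ⁅A, if j + 2 = i then T else ⊤⁆) A).Normal := by
  intro L
  induction L with
  | nil => intro A hA; exact hA
  | cons a L ih =>
      intro A hA
      apply ih
      haveI := hA
      by_cases h : a + 2 = i
      · simpa [h] using (inferInstance : (⁅A, T⁆).Normal)
      · simpa [h] using (inferInstance : (⁅A, (⊤ : Subgroup P)⁆).Normal)

instance gammaMixed_normal {P : Type*} [Group P] (T : Subgroup P) [hT : T.Normal] (c i : ℕ) :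
    (gammaMixed T c i).Normal :=
  foldl_comm_normal T i (List.range c) T hT

instance finsetSup_gammaMixed_normal {P : Type*} [Group P] (T : Subgroup P) [T.Normal]
    (c : ℕ) (s : Finset ℕ) : (s.sup (gammaMixed T c)).Normal := by
  induction s using Finset.cons_induction with
  | empty => simpa [Finset.sup_empty] using (inferInstance : (⊥ : Subgroup P).Normal)
  | cons a s ha ih =>
      rw [Finset.sup_cons]
      haveI := ih
      exact Subgroup.sup_normal _ _

/-- Minimal number of generators of a group. -/
noncomputable def dGen (X : Type*) [Group X] : ℕ :=
  sInf {n | ∃ s : Finset X, s.card = n ∧ Subgroup.closure (s : Set X) = ⊤}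

/-- Minimal number of generators of an additive group. -/
noncomputable def dGenAdd (X : Type*) [AddGroup X] : ℕ :=
  sInf {n | ∃ s : Finset X, s.card = n ∧ AddSubgroup.closure (s : Set X) = ⊤}

section ItAux

variable {P : Type*} [Group P]

theorem itComm_succ_eq (X Y : Subgroup P) (n : ℕ) :
    itComm X Y (n + 1) = itComm ⁅X, Y⁆ Y n := by
  induction n with
  | zero => rfl
  | succ n ih => show ⁅itComm X Y (n+1), Y⁆ = _; rw [ih]; rfl

theorem itComm_mono {X X' : Subgroup P} (Y : Subgroup P) (h : X ≤ X') (n : ℕ) :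
    itComm X Y n ≤ itComm X' Y n := by
  induction n with
  | zero => exact h
  | succ n ih => exact Subgroup.commutator_mono ih le_rfl

theorem itComm_le_self (X : Subgroup P) [X.Normal] (n : ℕ) : itComm X ⊤ n ≤ X := by
  induction n with
  | zero => exact le_rfl
  | succ n ih =>
      calc ⁅itComm X ⊤ n, (⊤ : Subgroup P)⁆ ≤ ⁅X, (⊤ : Subgroup P)⁆ :=
            Subgroup.commutator_mono ih le_rfl
        _ ≤ X := Subgroup.commutator_le_left X ⊤

theorem itComm_add (X Y : Subgroup P) (a b : ℕ) :
    itComm X Y (a + b) = itComm (itComm X Y a) Y b := by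
  induction b with
  | zero => rfl
  | succ b ih => show ⁅itComm X Y (a+b), Y⁆ = _; rw [ih]; rfl

theorem itComm_le_of_le (X : Subgroup P) [X.Normal] {m n : ℕ} (h : n ≤ m) :
    itComm X ⊤ m ≤ itComm X ⊤ n := by
  obtain ⟨k, rfl⟩ := Nat.exists_eq_add_of_le h
  rw [itComm_add]
  exact itComm_le_self _ _

theorem itComm_bot (n : ℕ) : itComm (⊥ : Subgroup P) ⊤ n = ⊥ := by
  induction n with
  | zero => rfl
  | succ n ih => show ⁅itComm (⊥:Subgroup P) ⊤ n, (⊤ : Subgroup P)⁆ = ⊥; rw [ih]; exact Subgroup.commutator_bot_left _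

theorem itComm_map {P' : Type*} [Group P'] (f : P →* P') (hf : Function.Surjective f)
    (X : Subgroup P) (n : ℕ) : (itComm X ⊤ n).map f = itComm (X.map f) ⊤ n := by
  induction n with
  | zero => rfl
  | succ n ih =>
      show Subgroup.map f ⁅itComm X ⊤ n, (⊤ : Subgroup P)⁆ = ⁅itComm (X.map f) ⊤ n, ⊤⁆
      rw [Subgroup.map_commutator, ih, Subgroup.map_top_of_surjective f hf]

end ItAux

open scoped commutatorElement

section CW

variable {P : Type*} [Group P]

/-- iterated commutator word -/
def cw : P → List P → P
  | x, [] => x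
  | x, f :: l => cw ⁅x, f⁆ l

@[simp] theorem cw_nil (x : P) : cw x [] = x := rfl
@[simp] theorem cw_cons (x f : P) (l : List P) : cw x (f :: l) = cw ⁅x, f⁆ l := rfl

theorem cw_append (x : P) (l₁ l₂ : List P) : cw x (l₁ ++ l₂) = cw (cw x l₁) l₂ := by
  induction l₁ generalizing x with
  | nil => rfl
  | cons f l₁ ih => simp [ih]

theorem cw_one (l : List P) : cw (1 : P) l = 1 := by
  induction l with
  | nil => rfl
  | cons f l ih => simp [ih]

theorem cw_mem (X : Subgroup P) {x : P} (hx : x ∈ X) (l : List P) :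
    cw x l ∈ itComm X ⊤ l.length := by
  induction l generalizing X x with
  | nil => exact hx
  | cons f l ih =>
      rw [cw_cons, List.length_cons, itComm_succ_eq]
      exact ih ⁅X, ⊤⁆ (Subgroup.commutator_mem_commutator hx (Subgroup.mem_top f))

theorem foldl_congr' {α β : Type*} (f g : β → α → β) (L : List α) (b : β)
    (h : ∀ b' : β, ∀ a ∈ L, f b' a = g b' a) : L.foldl f b = L.foldl g b := by
  induction L generalizing b with
  | nil => rfl
  | cons a L ih =>
      rw [List.foldl_cons, List.foldl_cons, h b a List.mem_cons_self]
      exact ih _ fun b' a' ha' => h b' a' (List.mem_cons_of_mem a ha')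

theorem foldl_top_eq_itComm (L : List ℕ) (X : Subgroup P) :
    L.foldl (fun A _ => ⁅A, (⊤ : Subgroup P)⁆) X = itComm X ⊤ L.length := by
  induction L generalizing X with
  | nil => rfl
  | cons a L ih =>
      rw [List.foldl_cons, ih, List.length_cons, itComm_succ_eq]

theorem gammaMixed_eq (X : Subgroup P) (k m : ℕ) :
    gammaMixed X (k + 1 + m) (k + 2) = itComm ⁅itComm X ⊤ k, X⁆ ⊤ m := by
  unfold gammaMixed
  rw [List.range_add, List.foldl_append, List.foldl_map]
  have h0 : (List.range k).foldl (fun A j => ⁅A, if j + 2 = k + 2 then X else ⊤⁆) X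
      = itComm X ⊤ k := by
    have h0' := foldl_top_eq_itComm (List.range k) X
    rw [List.length_range] at h0'
    rw [← h0']
    refine foldl_congr' _ _ _ _ ?_
    intro A a ha
    have hak : a < k := List.mem_range.mp ha
    simp [show a ≠ k by omega]
  have h1 : (List.range (k+1)).foldl
      (fun A j => ⁅A, if j + 2 = k + 2 then X else ⊤⁆) X = ⁅itComm X ⊤ k, X⁆ := by
    rw [List.range_succ, List.foldl_append, h0]; simp
  rw [h1]
  have h2 := foldl_top_eq_itComm (List.range m) ⁅itComm X ⊤ k, X⁆
  rw [List.length_range] at h2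
  rw [← h2]
  refine foldl_congr' _ _ _ _ ?_
  intro A a _
  simp [show k + 1 + a ≠ k by omega]

end CW
section CoreAdd

variable {Q : Type*} [Group Q] (T : Subgroup Q) [hT : T.Normal] (c : ℕ)

theorem comm_mul_left' (a b f : Q) : ⁅a * b, f⁆ = ⁅a, ⁅b, f⁆⁆ * ⁅b, f⁆ * ⁅a, f⁆ := by
  simp only [commutatorElement_def]; group

theorem comm_mul_right' (a f g : Q) : ⁅a, f * g⁆ = ⁅a, f⁆ * ⁅f, ⁅a, g⁆⁆ * ⁅a, g⁆ := by
  simp only [commutatorElement_def]; group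

theorem cw_central (hTc : itComm T ⊤ (c+1) = ⊥) {a : Q} (ha : a ∈ itComm T ⊤ c) (b : Q) :
    a * b = b * a := by
  have h0 : ⁅a, b⁆ ∈ itComm T ⊤ (c+1) :=
    Subgroup.commutator_mem_commutator ha (Subgroup.mem_top b)
  rw [hTc, Subgroup.mem_bot] at h0
  exact (commutatorElement_eq_one_iff_commute.mp h0).eq

theorem cw_van (hTc : itComm T ⊤ (c+1) = ⊥) {x : Q} {m : ℕ} (hx : x ∈ itComm T ⊤ m)
    (l : List Q) (h : c + 1 ≤ m + l.length) : cw x l = 1 := by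
  have h1 := cw_mem _ hx l
  rw [← itComm_add] at h1
  have h2 : itComm T ⊤ (m + l.length) ≤ (⊥ : Subgroup Q) := hTc ▸ itComm_le_of_le T h
  exact Subgroup.mem_bot.mp (h2 h1)

theorem cw_in_c {x : Q} {j : ℕ} (hx : x ∈ itComm T ⊤ j) (l : List Q)
    (h : j + l.length = c) : cw x l ∈ itComm T ⊤ c := by
  have h1 := cw_mem _ hx l
  rw [← itComm_add, h] at h1
  exact h1

theorem cw_add (hTc : itComm T ⊤ (c+1) = ⊥) :
    ∀ (l : List Q) (j : ℕ) (x y : Q), j + l.length = c →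
      x ∈ itComm T ⊤ j → y ∈ itComm T ⊤ j → cw (x * y) l = cw x l * cw y l := by
  intro l
  induction l with
  | nil => intro j x y _ _ _; rfl
  | cons f l ih =>
      intro j x y h hx hy
      have hyf : ⁅y, f⁆ ∈ itComm T ⊤ (j+1) :=
        Subgroup.commutator_mem_commutator hy (Subgroup.mem_top f)
      have hxf : ⁅x, f⁆ ∈ itComm T ⊤ (j+1) :=
        Subgroup.commutator_mem_commutator hx (Subgroup.mem_top f)
      have he : ⁅x, ⁅y, f⁆⁆ ∈ itComm T ⊤ (j+2) := by
        have h1 : ⁅x, ⁅y, f⁆⁆ ∈ ⁅itComm T ⊤ j, itComm T ⊤ (j+1)⁆ :=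
          Subgroup.commutator_mem_commutator hx hyf
        have h2 : ⁅itComm T ⊤ j, itComm T ⊤ (j+1)⁆ ≤ itComm T ⊤ (j+2) := by
          rw [Subgroup.commutator_comm]
          exact Subgroup.commutator_mono le_rfl le_top
        exact h2 h1
      have hlen : (j+1) + l.length = c := by
        simp only [List.length_cons] at h; omega
      have h12 : itComm T ⊤ (j+2) ≤ itComm T ⊤ (j+1) := itComm_le_of_le T (by omega)
      rw [cw_cons, cw_cons, cw_cons, comm_mul_left', mul_assoc,
        ih (j+1) _ _ hlen (h12 he) (mul_mem hyf hxf),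
        ih (j+1) _ _ hlen hyf hxf,
        cw_van T c hTc he l (by omega), one_mul]
      exact (cw_central T c hTc (cw_in_c T c hxf l hlen) _).symm

theorem cw_inv (hTc : itComm T ⊤ (c+1) = ⊥) (l : List Q) (j : ℕ) (x : Q)
    (h : j + l.length = c) (hx : x ∈ itComm T ⊤ j) : cw x⁻¹ l = (cw x l)⁻¹ := by
  have h1 : cw (x⁻¹ * x) l = cw x⁻¹ l * cw x l := cw_add T c hTc l j _ _ h (inv_mem hx) hx
  rw [inv_mul_cancel, cw_one] at h1
  exact eq_inv_of_mul_eq_one_left h1.symm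

theorem cw_mid_head (hTc : itComm T ⊤ (c+1) = ⊥) (l : List Q) (j : ℕ) (x f f' : Q)
    (h : j + 1 + l.length = c) (hx : x ∈ itComm T ⊤ j) :
    cw x ((f * f') :: l) = cw x (f :: l) * cw x (f' :: l) := by
  have hxf : ⁅x, f⁆ ∈ itComm T ⊤ (j+1) :=
    Subgroup.commutator_mem_commutator hx (Subgroup.mem_top f)
  have hxf' : ⁅x, f'⁆ ∈ itComm T ⊤ (j+1) :=
    Subgroup.commutator_mem_commutator hx (Subgroup.mem_top f')
  have he : ⁅f, ⁅x, f'⁆⁆ ∈ itComm T ⊤ (j+2) := by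
    have h1 : ⁅f, ⁅x, f'⁆⁆ ∈ ⁅(⊤ : Subgroup Q), itComm T ⊤ (j+1)⁆ :=
      Subgroup.commutator_mem_commutator (Subgroup.mem_top f) hxf'
    have h2 : ⁅(⊤ : Subgroup Q), itComm T ⊤ (j+1)⁆ ≤ itComm T ⊤ (j+2) := by
      rw [Subgroup.commutator_comm]
      exact le_rfl
    exact h2 h1
  have h12 : itComm T ⊤ (j+2) ≤ itComm T ⊤ (j+1) := itComm_le_of_le T (by omega)
  have hlen : (j+1) + l.length = c := by omega
  rw [cw_cons, cw_cons, cw_cons, comm_mul_right', mul_assoc,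
    cw_add T c hTc l (j+1) _ _ hlen hxf (mul_mem (h12 he) hxf'),
    cw_add T c hTc l (j+1) _ _ hlen (h12 he) hxf',
    cw_van T c hTc he l (by omega), one_mul]

theorem cw_mid (hTc : itComm T ⊤ (c+1) = ⊥) :
    ∀ (l₁ : List Q) (j : ℕ) (x : Q), x ∈ itComm T ⊤ j →
      ∀ (f f' : Q) (l₂ : List Q), j + l₁.length + 1 + l₂.length = c →
      cw x (l₁ ++ (f * f') :: l₂) = cw x (l₁ ++ f :: l₂) * cw x (l₁ ++ f' :: l₂) := by
  intro l₁
  induction l₁ with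
  | nil =>
      intro j x hx f f' l₂ h
      simp only [List.nil_append]
      exact cw_mid_head T c hTc l₂ j x f f' (by simpa using h) hx
  | cons g l₁ ih =>
      intro j x hx f f' l₂ h
      simp only [List.cons_append, cw_cons]
      exact ih (j+1) ⁅x, g⁆ (Subgroup.commutator_mem_commutator hx (Subgroup.mem_top g))
        f f' l₂ (by simp only [List.length_cons] at h ⊢; omega)

end CoreAdd
set_option linter.unusedSectionVars false

section CoreSlots

variable {Q : Type*} [Group Q] (T R : Subgroup Q) [T.Normal] [R.Normal] (c : ℕ)

theorem cw_slotR (hR : itComm R ⊤ c = ⊥) {r : Q} (hr : r ∈ R) (l : List Q)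
    (hl : l.length = c) : cw r l = 1 := by
  have h1 := cw_mem R hr l
  rw [hl, hR, Subgroup.mem_bot] at h1
  exact h1

theorem cw_slotT (hgam : ∀ i, 2 ≤ i → i ≤ c + 1 → gammaMixed T c i = ⊥)
    {t s : Q} (ht : t ∈ T) (hs : s ∈ T) (l₁ l₂ : List Q)
    (h : l₁.length + 1 + l₂.length = c) : cw t (l₁ ++ s :: l₂) = 1 := by
  subst h
  rw [cw_append, cw_cons]
  have h1 := cw_mem T ht l₁
  have h2 : ⁅cw t l₁, s⁆ ∈ ⁅itComm T ⊤ l₁.length, T⁆ :=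
    Subgroup.commutator_mem_commutator h1 hs
  have h3 := cw_mem _ h2 l₂
  have h4 := gammaMixed_eq T l₁.length l₂.length
  rw [hgam (l₁.length + 2) (by omega) (by omega)] at h4
  rw [← h4] at h3
  exact Subgroup.mem_bot.mp h3

theorem itCommC_comm (hTc : itComm T ⊤ (c+1) = ⊥) (u v : ↥(itComm T ⊤ c)) : u * v = v * u :=
  Subtype.ext (cw_central T c hTc u.2 v.1)

/-- the slot homomorphism -/
noncomputable def slotHom (hTc : itComm T ⊤ (c+1) = ⊥) {t : Q} (ht : t ∈ T)
    (l₁ l₂ : List Q) (h : l₁.length + 1 + l₂.length = c) : Q →* ↥(itComm T ⊤ c) :=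
  MonoidHom.mk' (fun f => ⟨cw t (l₁ ++ f :: l₂), by
      refine cw_in_c T c (show t ∈ itComm T ⊤ 0 from ht) _ ?_
      simp only [List.length_append, List.length_cons, Nat.zero_add]
      omega⟩)
    (fun f f' => Subtype.ext (cw_mid T c hTc l₁ 0 t ht f f' l₂ (by omega)))

theorem cw_slotKill (hTc : itComm T ⊤ (c+1) = ⊥)
    (hgam : ∀ i, 2 ≤ i → i ≤ c + 1 → gammaMixed T c i = ⊥)
    {t e : Q} (ht : t ∈ T) (he : e ∈ _root_.commutator Q ⊔ T) (l₁ l₂ : List Q)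
    (h : l₁.length + 1 + l₂.length = c) : cw t (l₁ ++ e :: l₂) = 1 := by
  have hker : _root_.commutator Q ⊔ T ≤ (slotHom T c hTc ht l₁ l₂ h).ker := by
    refine sup_le ?_ ?_
    · rw [_root_.commutator_def, Subgroup.commutator_le]
      intro a _ b _
      rw [MonoidHom.mem_ker, map_commutatorElement]
      exact commutatorElement_eq_one_iff_commute.mpr
        (itCommC_comm T c hTc _ _)
    · intro s hs
      rw [MonoidHom.mem_ker]
      exact Subtype.ext (cw_slotT T c hgam ht hs l₁ l₂ h)
  have h1 : slotHom T c hTc ht l₁ l₂ h e = 1 := hker he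
  exact congrArg Subtype.val h1

theorem cw_listCongr (hTc : itComm T ⊤ (c+1) = ⊥)
    (hgam : ∀ i, 2 ≤ i → i ≤ c + 1 → gammaMixed T c i = ⊥) :
    ∀ {l₂ l₂' : List Q},
      List.Forall₂ (fun f f' => f⁻¹ * f' ∈ _root_.commutator Q ⊔ T) l₂ l₂' →
      ∀ (l₁ : List Q) {t : Q}, t ∈ T → l₁.length + l₂.length = c →
      cw t (l₁ ++ l₂) = cw t (l₁ ++ l₂') := by
  intro l₂ l₂' hf
  induction hf with
  | nil => intro l₁ t _ _; rfl
  | @cons f f' l₂ l₂' hff' hrest ih =>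
      intro l₁ t ht hlen
      have hlen2 : l₂'.length = l₂.length := hrest.length_eq.symm
      have hl : l₁.length + 1 + l₂.length = c := by
        simp only [List.length_cons] at hlen; omega
      have step1 : cw t (l₁ ++ f :: l₂) = cw t (l₁ ++ f :: l₂') := by
        have h1 : cw t ((l₁ ++ [f]) ++ l₂) = cw t ((l₁ ++ [f]) ++ l₂') :=
          ih (l₁ ++ [f]) ht (by simp; omega)
        simpa [List.append_assoc] using h1
      have step2 : cw t (l₁ ++ f' :: l₂') = cw t (l₁ ++ f :: l₂') := by
        have hsplit : f' = f * (f⁻¹ * f') := by group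
        rw [hsplit, cw_mid T c hTc l₁ 0 t ht f (f⁻¹ * f') l₂' (by omega),
          cw_slotKill T c hTc hgam ht hff' l₁ l₂' (by omega), mul_one]
      rw [step1, step2]

theorem cw_gen (hTc : itComm T ⊤ (c+1) = ⊥) :
    itComm T ⊤ c ≤ Subgroup.closure {v : Q | ∃ t ∈ T, ∃ l : List Q, l.length = c ∧ cw t l = v} := by
  set Vals := {v : Q | ∃ t ∈ T, ∃ l : List Q, l.length = c ∧ cw t l = v} with hV
  have main : ∀ j, j ≤ c → ∀ x ∈ itComm T ⊤ j, ∀ l : List Q, l.length = c - j →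
      cw x l ∈ Subgroup.closure Vals := by
    intro j
    induction j with
    | zero =>
        intro _ x hx l hl
        exact Subgroup.subset_closure ⟨x, hx, l, by simpa using hl, rfl⟩
    | succ j ih =>
        intro hj x hx l hl
        have hlc : j + 1 + l.length = c := by omega
        let U : Subgroup Q :=
          { carrier := {y | y ∈ itComm T ⊤ (j+1) ∧ cw y l ∈ Subgroup.closure Vals}
            one_mem' := ⟨one_mem _, by rw [cw_one]; exact one_mem _⟩
            mul_mem' := fun {a b} ha hb => ⟨mul_mem ha.1 hb.1, by
              rw [cw_add T c hTc l (j+1) a b (by omega) ha.1 hb.1]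
              exact mul_mem ha.2 hb.2⟩
            inv_mem' := fun {a} ha => ⟨inv_mem ha.1, by
              rw [cw_inv T c hTc l (j+1) a (by omega) ha.1]
              exact inv_mem ha.2⟩ }
        have hU : itComm T ⊤ (j+1) ≤ U := by
          show ⁅itComm T ⊤ j, (⊤ : Subgroup Q)⁆ ≤ U
          rw [Subgroup.commutator_le]
          intro a ha b _
          refine ⟨Subgroup.commutator_mem_commutator ha (Subgroup.mem_top b), ?_⟩
          show cw ⁅a, b⁆ l ∈ Subgroup.closure Vals
          have hcons : cw ⁅a, b⁆ l = cw a (b :: l) := rfl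
          rw [hcons]
          exact ih (by omega) a ha (b :: l) (by simp only [List.length_cons]; omega)
        exact (hU hx).2
  intro x hx
  have h0 := main c le_rfl x hx [] (by simp)
  simpa using h0

theorem cw_vals_le (hTc : itComm T ⊤ (c+1) = ⊥) :
    Subgroup.closure {v : Q | ∃ t ∈ T, ∃ l : List Q, l.length = c ∧ cw t l = v}
      ≤ itComm T ⊤ c := by
  rw [Subgroup.closure_le]
  rintro v ⟨t, ht, l, hl, rfl⟩
  exact cw_in_c T c (show t ∈ itComm T ⊤ 0 from ht) l (by omega)

end CoreSlots
section TensorCP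

theorem nat_card_dvd_of_addSurj {A C : Type*} [AddGroup A] [AddGroup C] (f : A →+ C)
    (hf : Function.Surjective f) : Nat.card C ∣ Nat.card A := by
  have e := QuotientAddGroup.quotientKerEquivOfSurjective f hf
  rw [← Nat.card_congr e.toEquiv]
  exact Dvd.intro _ (AddSubgroup.card_eq_card_quotient_mul_card_addSubgroup f.ker).symm

/-- mixed pure tensors in the iterated tensor product -/
noncomputable def tprodMix (M B : ModuleCat ℤ) : ∀ c, ↑M → (Fin c → ↑B) → ↑(iterTensor M B c)
  | 0, x, _ => x
  | c+1, x, bs => (tprodMix M B c x (Fin.init bs)) ⊗ₜ[ℤ] (bs (Fin.last c))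

theorem tensor_lift (c : ℕ) (M B : ModuleCat.{0} ℤ) :
    ∀ (W : Type) [AddCommGroup W] (μ : ↑M → (Fin c → ↑B) → W),
    (∀ x y bs, μ (x + y) bs = μ x bs + μ y bs) →
    (∀ x bs (i : Fin c) b b', μ x (Function.update bs i (b + b')) =
        μ x (Function.update bs i b) + μ x (Function.update bs i b')) →
    ∃ Φ : ↑(iterTensor M B c) →+ W, ∀ x bs, Φ (tprodMix M B c x bs) = μ x bs := by
  induction c with
  | zero =>
      intro W _ μ H1 _
      refine ⟨AddMonoidHom.mk' (fun x => μ x (fun i => i.elim0))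
        fun a b => H1 a b _, ?_⟩
      intro x bs
      show μ x _ = μ x bs
      congr 1
      funext i
      exact i.elim0
  | succ c ih =>
      intro W _ μ H1 H2
      have hsnoc : ∀ (x : ↑M) (bs : Fin c → ↑B) (b b' : ↑B),
          μ x (Fin.snoc bs (b + b')) = μ x (Fin.snoc bs b) + μ x (Fin.snoc bs b') := by
        intro x bs b b'
        have h1 := H2 x (Fin.snoc bs b) (Fin.last c) b b'
        rwa [Fin.update_snoc_last, Fin.update_snoc_last, Fin.update_snoc_last] at h1
      set ν : ↑M → (Fin c → ↑B) → (↑B →+ W) := fun x bs =>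
        AddMonoidHom.mk' (fun b => μ x (Fin.snoc bs b)) (hsnoc x bs) with hν
      have hν_apply : ∀ x bs b, ν x bs b = μ x (Fin.snoc bs b) := fun _ _ _ => rfl
      obtain ⟨Ψ, hΨ⟩ := ih (↑B →+ W) ν
        (by
          intro x y bs
          refine AddMonoidHom.ext fun b => ?_
          simp only [hν_apply, AddMonoidHom.add_apply]
          exact H1 x y _)
        (by
          intro x bs i b b'
          refine AddMonoidHom.ext fun b₀ => ?_
          simp only [hν_apply, AddMonoidHom.add_apply]
          rw [Fin.snoc_update, Fin.snoc_update, Fin.snoc_update]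
          exact H2 x (Fin.snoc bs b₀) i.castSucc b b')
      have hcompat : ∀ (z : ℤ) (m : ↑(iterTensor M B c)) (b : ↑B), Ψ (z • m) b = Ψ m (z • b) := by
        intro z m b
        rw [map_zsmul Ψ z m, map_zsmul (Ψ m) z b]
        rfl
      refine ⟨TensorProduct.liftAddHom Ψ (fun z m b => by
        convert hcompat z m b using 2; exact congrArg Ψ (int_smul_eq_zsmul _ z m)
        exact int_smul_eq_zsmul _ z b), ?_⟩
      intro x bs
      show TensorProduct.liftAddHom Ψ _
          ((tprodMix M B c x (Fin.init bs)) ⊗ₜ[ℤ] (bs (Fin.last c))) = μ x bs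
      rw [TensorProduct.liftAddHom_tmul, hΨ, hν_apply, Fin.snoc_init_self]

end TensorCP
section CoreDvd

theorem hom_kills_commutator {H C : Type*} [Group H] [Group C] (φ : H →* C)
    (hcomm : ∀ u v : C, u * v = v * u) {d : H} (hd : d ∈ _root_.commutator H) : φ d = 1 := by
  have h1 : _root_.commutator H ≤ φ.ker := by
    rw [_root_.commutator_def, Subgroup.commutator_le]
    intro p _ q _
    rw [MonoidHom.mem_ker, map_commutatorElement]
    exact commutatorElement_eq_one_iff_commute.mpr (hcomm _ _)
  exact h1 hd

theorem abel_diff {H : Type*} [Group H] {a b : H}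
    (h : Abelianization.of a = Abelianization.of b) : a⁻¹ * b ∈ _root_.commutator H :=
  QuotientGroup.eq.mp h

theorem abel_of_surj {H : Type*} [Group H] :
    Function.Surjective (Abelianization.of : H → Abelianization H) := fun x =>
  QuotientGroup.induction_on x fun z => ⟨z, rfl⟩

theorem ofFn_update' {n : ℕ} {X : Type*} (g : Fin n → X) (i : Fin n) (x : X) :
    List.ofFn (Function.update g i x) = (List.ofFn g).set i x := by
  apply List.ext_getElem
  · simp
  · intro j h1 h2
    rw [List.getElem_ofFn, List.getElem_set]
    simp only [List.length_ofFn] at h1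
    rcases eq_or_ne (i : ℕ) j with h | h
    · rw [if_pos h]
      have hij : ∀ (hj : j < n), (⟨j, hj⟩ : Fin n) = i := fun hj => Fin.ext (by simp [h.symm])
      rw [hij h1, Function.update_self]
    · rw [if_neg h, List.getElem_ofFn]
      have hij : ∀ (hj : j < n), (⟨j, hj⟩ : Fin n) ≠ i := fun hj hc => h (by rw [← hc])
      rw [Function.update_of_ne (hij h1)]

theorem update_comp_eq {n : ℕ} {X Y : Sort*} (f : X → Y) (g : Fin n → X) (i : Fin n) (v : X) :
    (fun j => f (Function.update g i v j)) = Function.update (fun j => f (g j)) i (f v) := by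
  funext j
  rcases eq_or_ne j i with rfl | h
  · simp
  · simp [Function.update_of_ne h]

theorem core_dvd {Q A B₀ : Type} [Group Q] [Group A] [Group B₀] (c : ℕ)
    (T R : Subgroup Q) [T.Normal] [R.Normal] (hRT : R ≤ T)
    (α : ↥T →* A) (hα : Function.Surjective α) (hkerα : ∀ t : ↥T, α t = 1 ↔ (t : Q) ∈ R)
    (β : Q →* B₀) (hβ : Function.Surjective β) (hkerβ : β.ker = T)
    (hR : itComm R ⊤ c = ⊥) (hTc : itComm T ⊤ (c+1) = ⊥)
    (hgam : ∀ i, 2 ≤ i → i ≤ c + 1 → gammaMixed T c i = ⊥) :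
    Nat.card ↥(itComm T ⊤ c) ∣ Nat.card (tensorPair A B₀ c) := by
  classical
  letI : CommGroup ↥(itComm T ⊤ c) :=
    { (inferInstance : Group ↥(itComm T ⊤ c)) with
      mul_comm := fun u v => itCommC_comm T c hTc u v }
  set sα : A → ↥T := Function.surjInv hα with hsαdef
  have hsα : ∀ a, α (sα a) = a := fun a => Function.surjInv_eq hα a
  set fβ : B₀ → Q := Function.surjInv hβ with hfβdef
  have hfβ : ∀ u, β (fβ u) = u := fun u => Function.surjInv_eq hβ u
  set aA : Abelianization A → A := Function.surjInv abel_of_surj with haAdef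
  have haA : ∀ x, Abelianization.of (aA x) = x := fun x => Function.surjInv_eq abel_of_surj x
  set aB : Abelianization B₀ → B₀ := Function.surjInv abel_of_surj with haBdef
  have haB : ∀ x, Abelianization.of (aB x) = x := fun x => Function.surjInv_eq abel_of_surj x
  have memT0 : ∀ {t : Q}, t ∈ T → t ∈ itComm T ⊤ 0 := fun h => h
  have memV : ∀ (t : Q), t ∈ T → ∀ (L : List Q), L.length = c → cw t L ∈ itComm T ⊤ c :=
    fun t ht L hL => cw_in_c T c (memT0 ht) L (by omega)
  -- the basic multilinear value
  set ν : A → (Fin c → B₀) → ↥(itComm T ⊤ c) := fun a us =>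
    ⟨cw ↑(sα a) (List.ofFn fun i => fβ (us i)),
      memV _ (sα a).2 _ (by simp)⟩ with hνdef
  -- first-argument congruence
  have cw1 : ∀ (a : A) (L : List Q), L.length = c → ∀ (t : ↥T), α t = a →
      cw ((sα a : ↥T) : Q) L = cw ((t : ↥T) : Q) L := by
    intro a L hL t hta
    have hr : ((t⁻¹ * sα a : ↥T) : Q) ∈ R := (hkerα _).mp
      (by rw [map_mul, map_inv, hta, hsα, inv_mul_cancel])
    have hdecomp : ((sα a : ↥T) : Q) = (t : Q) * ((t⁻¹ * sα a : ↥T) : Q) := by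
      push_cast; group
    rw [hdecomp, cw_add T c hTc L 0 _ _ (by omega) (memT0 t.2) (memT0 (hRT hr)),
      cw_slotR (R := R) (c := c) hR hr L hL, mul_one]
  have νmul : ∀ (a a' : A) (us : Fin c → B₀), ν (a * a') us = ν a us * ν a' us := by
    intro a a' us
    apply Subtype.ext
    show cw ((sα (a * a') : ↥T) : Q) _ = cw ((sα a : ↥T) : Q) _ * cw ((sα a' : ↥T) : Q) _
    rw [cw1 (a * a') _ (by simp) (sα a * sα a') (by rw [map_mul, hsα, hsα])]
    push_cast
    rw [cw_add T c hTc _ 0 _ _ (by simp) (memT0 (sα a).2) (memT0 (sα a').2)]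
  set φA : (Fin c → B₀) → (A →* ↥(itComm T ⊤ c)) := fun us =>
    MonoidHom.mk' (fun a => ν a us) (fun a a' => νmul a a' us) with hφAdef
  have νkillA : ∀ (a d : A) (us : Fin c → B₀), d ∈ _root_.commutator A →
      ν (a * d) us = ν a us := by
    intro a d us hd
    have h1 : φA us (a * d) = φA us a * φA us d := map_mul _ _ _
    rw [hom_kills_commutator (φA us) (fun u v => mul_comm u v) hd, mul_one] at h1
    exact h1
  -- slot update decomposition
  have hupdate : ∀ (us : Fin c → B₀) (i : Fin c) (u : B₀),
      (List.ofFn fun j => fβ (Function.update us i u j)) =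
        (List.ofFn fun j => fβ (us j)).take i ++
          fβ u :: (List.ofFn fun j => fβ (us j)).drop (i + 1) := by
    intro us i u
    rw [update_comp_eq (fun z => fβ z) us i u, ofFn_update',
      List.set_eq_take_append_cons_drop, if_pos (by simp [i.isLt])]
  have hlen1 : ∀ (us : Fin c → B₀) (i : Fin c),
      ((List.ofFn fun j => fβ (us j)).take i).length = i := by
    intro us i; simp [List.length_take]
  have hlen2 : ∀ (us : Fin c → B₀) (i : Fin c),
      ((List.ofFn fun j => fβ (us j)).drop (i + 1)).length = c - (i + 1) := by
    intro us i; simp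
  have νslotmul : ∀ (a : A) (us : Fin c → B₀) (i : Fin c) (u u' : B₀),
      ν a (Function.update us i (u * u')) =
        ν a (Function.update us i u) * ν a (Function.update us i u') := by
    intro a us i u u'
    apply Subtype.ext
    show cw _ _ = cw _ _ * cw _ _
    rw [hupdate, hupdate, hupdate]
    have hilt : (i : ℕ) < c := i.isLt
    have hLlen : ((List.ofFn fun j => fβ (us j)).take i).length + 1 +
        ((List.ofFn fun j => fβ (us j)).drop (i + 1)).length = c := by
      rw [hlen1, hlen2]; omega
    have hs : (fβ u * fβ u')⁻¹ * fβ (u * u') ∈ T := by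
      rw [← hkerβ, MonoidHom.mem_ker]
      rw [map_mul, map_inv, map_mul, hfβ, hfβ, hfβ, inv_mul_cancel]
    have hdecomp : fβ (u * u') = fβ u * (fβ u' * ((fβ u * fβ u')⁻¹ * fβ (u * u'))) := by
      group
    rw [hdecomp,
      cw_mid T c hTc _ 0 _ (memT0 (sα a).2) (fβ u) _ _ (by omega),
      cw_mid T c hTc _ 0 _ (memT0 (sα a).2) (fβ u') _ _ (by omega),
      cw_slotT (T := T) (c := c) hgam (sα a).2 hs _ _ (by omega), mul_one]
  set φB : A → (Fin c → B₀) → Fin c → (B₀ →* ↥(itComm T ⊤ c)) := fun a us i =>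
    MonoidHom.mk' (fun u => ν a (Function.update us i u)) (νslotmul a us i) with hφBdef
  have νkillB : ∀ (a : A) (us : Fin c → B₀) (i : Fin c) (u d : B₀),
      d ∈ _root_.commutator B₀ →
      ν a (Function.update us i (u * d)) = ν a (Function.update us i u) := by
    intro a us i u d hd
    have h1 : φB a us i (u * d) = φB a us i u * φB a us i d := map_mul _ _ _
    rw [hom_kills_commutator (φB a us i) (fun u v => mul_comm u v) hd, mul_one] at h1
    exact h1
  -- the multi-additive map on abelianizations
  set μ : AbOf A → (Fin c → AbOf B₀) → Additive ↥(itComm T ⊤ c) := fun x bs =>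
    Additive.ofMul (ν (aA (Additive.toMul x)) (fun i => aB (Additive.toMul (bs i)))) with hμdef
  have H1 : ∀ x y bs, μ (x + y) bs = μ x bs + μ y bs := by
    intro x y bs
    set a₁ := aA (Additive.toMul x)
    set a₂ := aA (Additive.toMul y)
    have hd : (a₁ * a₂)⁻¹ * aA (Additive.toMul (x + y)) ∈ _root_.commutator A := by
      apply abel_diff
      rw [map_mul, haA, haA, haA]
      rfl
    have hdecomp : aA (Additive.toMul (x + y)) =
        (a₁ * a₂) * ((a₁ * a₂)⁻¹ * aA (Additive.toMul (x + y))) := by group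
    show Additive.ofMul (ν (aA (Additive.toMul (x + y))) _) = _
    rw [hdecomp, νkillA _ _ _ hd, νmul]
    rfl
  have H2 : ∀ x bs (i : Fin c) (b b' : AbOf B₀),
      μ x (Function.update bs i (b + b')) =
        μ x (Function.update bs i b) + μ x (Function.update bs i b') := by
    intro x bs i b b'
    set f : AbOf B₀ → B₀ := fun z => aB (Additive.toMul z) with hfdef
    have hcomp : ∀ (v : AbOf B₀),
        (fun j => aB (Additive.toMul (Function.update bs i v j))) =
          Function.update (fun j => f (bs j)) i (f v) := fun v => update_comp_eq f bs i v
    have hd : (f b * f b')⁻¹ * f (b + b') ∈ _root_.commutator B₀ := by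
      apply abel_diff
      rw [map_mul, haB, haB, haB]
      rfl
    have hdecomp : f (b + b') = (f b * f b') * ((f b * f b')⁻¹ * f (b + b')) := by group
    show Additive.ofMul (ν _ _) = Additive.ofMul (ν _ _) + Additive.ofMul (ν _ _)
    rw [hcomp, hcomp, hcomp, hdecomp, νkillB _ _ _ _ _ hd, νslotmul]
    rfl
  obtain ⟨Φ, hΦ⟩ := tensor_lift c (ModuleCat.of ℤ (AbOf A)) (ModuleCat.of ℤ (AbOf B₀))
    (Additive ↥(itComm T ⊤ c)) μ H1 H2
  -- surjectivity
  have hmapcomm : Subgroup.map β (_root_.commutator Q) = _root_.commutator B₀ := by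
    rw [_root_.commutator_def, _root_.commutator_def, Subgroup.map_commutator,
      Subgroup.map_top_of_surjective β hβ]
  have hsurj : Function.Surjective Φ := by
    intro w
    obtain ⟨v, rfl⟩ : ∃ v : ↥(itComm T ⊤ c), Additive.ofMul v = w := ⟨Additive.toMul w, rfl⟩
    have hvc : (v : Q) ∈ Subgroup.closure
        {x : Q | ∃ t ∈ T, ∃ l : List Q, l.length = c ∧ cw t l = x} := cw_gen T c hTc v.2
    have main : ∀ (hgV : (v : Q) ∈ itComm T ⊤ c),
        ∃ m, Φ m = Additive.ofMul (⟨(v : Q), hgV⟩ : ↥(itComm T ⊤ c)) := by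
      refine Subgroup.closure_induction
        (p := fun g hg => ∀ (hgV : g ∈ itComm T ⊤ c),
          ∃ m, Φ m = Additive.ofMul (⟨g, hgV⟩ : ↥(itComm T ⊤ c))) ?_ ?_ ?_ ?_ hvc
      · rintro g ⟨t, ht, L, hL, rfl⟩ hgV
        set a : A := α ⟨t, ht⟩ with hadef
        set x : AbOf A := Additive.ofMul (Abelianization.of a) with hxdef
        set bs : Fin c → AbOf B₀ := fun i =>
          Additive.ofMul (Abelianization.of (β (L.get ⟨i, by omega⟩))) with hbsdef
        refine ⟨tprodMix _ _ c x bs, ?_⟩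
        rw [hΦ]
        have e1 : ν (aA (Additive.toMul x)) (fun i => aB (Additive.toMul (bs i))) =
            ν a (fun i => aB (Additive.toMul (bs i))) := by
          have hd : a⁻¹ * aA (Abelianization.of a) ∈ _root_.commutator A :=
            abel_diff (haA _).symm
          have hsplit : aA (Abelianization.of a) = a * (a⁻¹ * aA (Abelianization.of a)) := by
            group
          show ν (aA (Abelianization.of a)) _ = _
          rw [hsplit, νkillA _ _ _ hd]
        have e2 : ν a (fun i => aB (Additive.toMul (bs i))) =
            ⟨cw t L, hgV⟩ := by
          apply Subtype.ext
          show cw ((sα a : ↥T) : Q) _ = cw t L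
          rw [cw1 a _ (by simp) ⟨t, ht⟩ rfl]
          have hf2 : List.Forall₂ (fun f f' => f⁻¹ * f' ∈ _root_.commutator Q ⊔ T) L
              (List.ofFn fun i => fβ (aB (Additive.toMul (bs i)))) := by
            rw [List.forall₂_iff_get]
            refine ⟨by simp [hL], ?_⟩
            intro i h1 h2
            rw [List.get_ofFn]
            set q0 := L.get ⟨i, h1⟩ with hq0def
            have hidx : (Fin.cast (by simp) (⟨i, h2⟩ : Fin (List.ofFn fun i =>
                fβ (aB (Additive.toMul (bs i)))).length) : Fin c) = ⟨i, by omega⟩ := by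
              apply Fin.ext; simp
            rw [hidx]
            have hbsi : Additive.toMul (bs ⟨i, by omega⟩) =
                Abelianization.of (β q0) := rfl
            rw [hbsi]
            set w0 := aB (Abelianization.of (β q0)) with hw0def
            have hd0 : (β q0)⁻¹ * w0 ∈ _root_.commutator B₀ := abel_diff (haB _).symm
            obtain ⟨dQ, hdQ, hdQβ⟩ : ∃ dQ ∈ _root_.commutator Q, β dQ = (β q0)⁻¹ * w0 := by
              rw [← hmapcomm] at hd0
              obtain ⟨dQ, h1', h2'⟩ := hd0
              exact ⟨dQ, h1', h2'⟩
            have hsT : dQ⁻¹ * (q0⁻¹ * fβ w0) ∈ T := by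
              rw [← hkerβ, MonoidHom.mem_ker, map_mul, map_inv, map_mul, map_inv, hfβ, hdQβ]
              group
            have hfinal : q0⁻¹ * fβ w0 = dQ * (dQ⁻¹ * (q0⁻¹ * fβ w0)) := by group
            rw [hfinal]
            exact mul_mem (Subgroup.mem_sup_left hdQ) (Subgroup.mem_sup_right hsT)
          have := cw_listCongr T c hTc hgam hf2 [] ht (by simpa using hL)
          simpa using this.symm
        simp only [hμdef]
        exact congrArg Additive.ofMul (e1.trans e2)
      · intro hgV
        refine ⟨0, ?_⟩
        rw [map_zero]
        have h1 : (⟨(1 : Q), hgV⟩ : ↥(itComm T ⊤ c)) = 1 := rfl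
        rw [h1]
        rfl
      · intro g h hg hh pg ph hgV
        obtain ⟨m1, hm1⟩ := pg (cw_vals_le T c hTc hg)
        obtain ⟨m2, hm2⟩ := ph (cw_vals_le T c hTc hh)
        refine ⟨m1 + m2, ?_⟩
        rw [map_add, hm1, hm2]
        rfl
      · intro g hg pg hgV
        obtain ⟨m1, hm1⟩ := pg (cw_vals_le T c hTc hg)
        refine ⟨-m1, ?_⟩
        rw [map_neg, hm1]
        rfl
    obtain ⟨m, hm⟩ := main v.2
    exact ⟨m, by rw [hm]⟩
  have hdvd := nat_card_dvd_of_addSurj Φ hsurj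
  have hcard : Nat.card (Additive ↥(itComm T ⊤ c)) = Nat.card ↥(itComm T ⊤ c) :=
    Nat.card_congr Additive.toMul
  rw [hcard] at hdvd
  exact hdvd

end CoreDvd
section Helpers

variable {P : Type*} [Group P]

theorem gammaMixed_map {P' : Type*} [Group P'] (f : P →* P') (hf : Function.Surjective f)
    (X : Subgroup P) (c i : ℕ) :
    (gammaMixed X c i).map f = gammaMixed (X.map f) c i := by
  unfold gammaMixed
  have main : ∀ (L : List ℕ) (A : Subgroup P),
      (L.foldl (fun A j => ⁅A, if j + 2 = i then X else ⊤⁆) A).map f =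
        L.foldl (fun A j => ⁅A, if j + 2 = i then X.map f else ⊤⁆) (A.map f) := by
    intro L
    induction L with
    | nil => intro A; rfl
    | cons a L ih =>
        intro A
        rw [List.foldl_cons, List.foldl_cons, ih]
        congr 1
        rw [Subgroup.map_commutator]
        congr 1
        by_cases h : a + 2 = i
        · simp [h]
        · simp [h, Subgroup.map_top_of_surjective f hf]
  exact main _ X

theorem gammaMixed_le_itComm (X : Subgroup P) [X.Normal] {c i : ℕ}
    (h2 : 2 ≤ i) (hic : i ≤ c + 1) : gammaMixed X c i ≤ itComm X ⊤ c := by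
  obtain ⟨k, rfl⟩ : ∃ k, i = k + 2 := ⟨i - 2, by omega⟩
  obtain ⟨m, rfl⟩ : ∃ m, c = k + 1 + m := ⟨c - 1 - k, by omega⟩
  rw [gammaMixed_eq]
  have h1 : ⁅itComm X ⊤ k, X⁆ ≤ itComm X ⊤ (k + 1) :=
    Subgroup.commutator_mono le_rfl le_top
  calc itComm ⁅itComm X ⊤ k, X⁆ ⊤ m ≤ itComm (itComm X ⊤ (k + 1)) ⊤ m :=
        itComm_mono _ h1 m
    _ = itComm X ⊤ (k + 1 + m) := (itComm_add X ⊤ (k + 1) m).symm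

theorem gammaMixed_le_of_comm_le {X Rp : Subgroup P} [X.Normal] [Rp.Normal]
    (hXR : ⁅X, (⊤ : Subgroup P)⁆ ≤ Rp) {c i : ℕ}
    (h2 : 2 ≤ i) (hic : i ≤ c + 1) : gammaMixed X c i ≤ Rp := by
  obtain ⟨k, rfl⟩ : ∃ k, i = k + 2 := ⟨i - 2, by omega⟩
  obtain ⟨m, rfl⟩ : ∃ m, c = k + 1 + m := ⟨c - 1 - k, by omega⟩
  rw [gammaMixed_eq]
  have h1 : ⁅itComm X ⊤ k, X⁆ ≤ Rp := by
    calc ⁅itComm X ⊤ k, X⁆ ≤ itComm X ⊤ (k + 1) := Subgroup.commutator_mono le_rfl le_top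
      _ ≤ itComm X ⊤ 1 := itComm_le_of_le X (by omega)
      _ = ⁅X, ⊤⁆ := rfl
      _ ≤ Rp := hXR
  calc itComm ⁅itComm X ⊤ k, X⁆ ⊤ m ≤ itComm Rp ⊤ m := itComm_mono _ h1 m
    _ ≤ Rp := itComm_le_self Rp m

theorem relindex_eq_card_map (Bn C : Subgroup P) [Bn.Normal] :
    Bn.relIndex C = Nat.card ↥(C.map (QuotientGroup.mk' Bn)) := by
  set q := QuotientGroup.mk' Bn with hq
  have hker : (q.comp C.subtype).ker = Bn.subgroupOf C := by
    rw [← MonoidHom.comap_ker, QuotientGroup.ker_mk']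
    rfl
  have hrange : (q.comp C.subtype).range = C.map q := by
    ext x
    constructor
    · rintro ⟨y, rfl⟩; exact ⟨y, y.2, rfl⟩
    · rintro ⟨z, hz, rfl⟩; exact ⟨⟨z, hz⟩, rfl⟩
  calc Bn.relIndex C = Nat.card (↥C ⧸ Bn.subgroupOf C) := Subgroup.index_eq_card _
    _ = Nat.card (↥C ⧸ (q.comp C.subtype).ker) := by rw [hker]
    _ = Nat.card ↥((q.comp C.subtype).range) :=
        Nat.card_congr (QuotientGroup.quotientKerEquivRange _).toEquiv
    _ = Nat.card ↥(C.map q) := by rw [hrange]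

end Helpers
/-- Let `(G,N)` be a pair of finite groups, `K` a central subgroup of `G` contained in `N`,
`π : F ↠ G` a free presentation with kernel `R`, and `T = π⁻¹(K)`.  Then
`[K ∩ [N,_c G] : [K,_c G]] · |M^{(c)}(G,N)|` divides
`|M^{(c)}(G/K,N/K)| · |⊗^{c+1}(K, G/K)| · |([R,_c F]·∏_{i=2}^{c+1} γ_{c+1}(T,F)_i)/[R,_c F]|`. -/
theorem card_multiplier_dvd_of_central {G : Type} [Group G] [Finite G]
    {F : Type} [Group F] [IsFreeGroup F] (π : F →* G) (hπ : Function.Surjective π)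
    (N K : Subgroup G) [N.Normal] [K.Normal] (hKN : K ≤ N) (hKZ : K ≤ Subgroup.center G)
    (c : ℕ) (hc : 1 ≤ c) :
    (itComm K ⊤ c).relIndex (K ⊓ itComm N ⊤ c) * Nat.card (McPair π N c) ∣
      Nat.card (McPairQuot π N K c) * Nat.card (tensorPair K (G ⧸ K) c) *
        Nat.card
          ((itComm π.ker ⊤ c ⊔ (Finset.Icc 2 (c+1)).sup (gammaMixed (K.comap π) c) :
              Subgroup F) ⧸
            (itComm π.ker ⊤ c).subgroupOf
              (itComm π.ker ⊤ c ⊔ (Finset.Icc 2 (c+1)).sup (gammaMixed (K.comap π) c))) := by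
  classical
  haveI hTfN : (K.comap π).Normal := Subgroup.Normal.comap ‹K.Normal› π
  haveI hSN : (N.comap π).Normal := Subgroup.Normal.comap ‹N.Normal› π
  set Tf := K.comap π with hTf
  set S := N.comap π with hS
  set D := itComm π.ker ⊤ c with hD
  set Cf := itComm Tf ⊤ c with hCf
  set Γm := (Finset.Icc 2 (c+1)).sup (gammaMixed Tf c) with hΓm
  set Bs := D ⊔ Γm with hBs
  set Af := Tf ⊓ itComm S ⊤ c with hAf
  set A' := π.ker ⊓ itComm S ⊤ c with hA'
  -- basic inclusions
  have hTfR : ⁅Tf, (⊤ : Subgroup F)⁆ ≤ π.ker := by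
    rw [Subgroup.commutator_le]
    intro t ht f _
    rw [MonoidHom.mem_ker, map_commutatorElement]
    exact commutatorElement_eq_one_iff_commute.mpr
      ((Subgroup.mem_center_iff.mp (hKZ (Subgroup.mem_comap.mp ht)) (π f)).symm)
  have hKerTf : π.ker ≤ Tf := by
    intro x hx
    rw [Subgroup.mem_comap, MonoidHom.mem_ker.mp hx]
    exact one_mem K
  have hTfS : Tf ≤ S := Subgroup.comap_mono hKN
  have hCR : Cf ≤ π.ker := by
    obtain ⟨m, rfl⟩ := Nat.exists_eq_add_of_le hc
    calc itComm Tf ⊤ (1 + m) = itComm (itComm Tf ⊤ 1) ⊤ m := itComm_add Tf ⊤ 1 m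
      _ ≤ itComm π.ker ⊤ m := itComm_mono _ hTfR m
      _ ≤ π.ker := itComm_le_self _ m
  have hDC : D ≤ Cf := itComm_mono _ hKerTf c
  have hΓC : Γm ≤ Cf := Finset.sup_le fun i hi =>
    gammaMixed_le_itComm Tf (Finset.mem_Icc.mp hi).1 (Finset.mem_Icc.mp hi).2
  have hBsC : Bs ≤ Cf := sup_le hDC hΓC
  have hΓR : Γm ≤ π.ker := Finset.sup_le fun i hi =>
    gammaMixed_le_of_comm_le hTfR (Finset.mem_Icc.mp hi).1 (Finset.mem_Icc.mp hi).2
  have hDR : D ≤ π.ker := itComm_le_self _ c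
  have hBsR : Bs ≤ π.ker := sup_le hDR hΓR
  have hCA' : Cf ≤ A' := le_inf hCR (itComm_mono _ hTfS c)
  have hA'A : A' ≤ Af := inf_le_inf_right _ hKerTf
  have hCA : Cf ≤ Af := hCA'.trans hA'A
  have hDA' : D ≤ A' := le_inf hDR (itComm_mono _ (hKerTf.trans hTfS) c)
  have hDBs : D ≤ Bs := le_sup_left
  -- step 1 : itComm K ⊤ c = ⊥
  have hKbot : itComm K ⊤ c = ⊥ := by
    obtain ⟨m, rfl⟩ := Nat.exists_eq_add_of_le hc
    have h1 : ⁅K, (⊤ : Subgroup G)⁆ = ⊥ := by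
      rw [eq_bot_iff, Subgroup.commutator_le]
      intro k hk g _
      rw [Subgroup.mem_bot]
      exact commutatorElement_eq_one_iff_commute.mpr
        ((Subgroup.mem_center_iff.mp (hKZ hk) g).symm)
    calc itComm K ⊤ (1 + m) = itComm (itComm K ⊤ 1) ⊤ m := itComm_add K ⊤ 1 m
      _ = itComm ⊥ ⊤ m := by rw [show itComm K ⊤ 1 = ⁅K, ⊤⁆ from rfl, h1]
      _ = ⊥ := itComm_bot m
  rw [hKbot, Subgroup.relIndex_bot_left]
  -- step 2 : card of K ⊓ [N,cG]
  have hmapS : Subgroup.map π S = N := Subgroup.map_comap_eq_self_of_surjective hπ N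
  have hmapitS : Subgroup.map π (itComm S ⊤ c) = itComm N ⊤ c := by
    rw [itComm_map π hπ, hmapS]
  have hcard2 : Nat.card ↥(K ⊓ itComm N ⊤ c : Subgroup G) = A'.relIndex Af := by
    have hmem : ∀ x : ↥Af, (π.comp Af.subtype) x ∈ K ⊓ itComm N ⊤ c := by
      intro x
      refine Subgroup.mem_inf.mpr ⟨Subgroup.mem_comap.mp x.2.1, ?_⟩
      rw [← hmapitS]
      exact Subgroup.mem_map_of_mem π x.2.2
    set ψ := (π.comp Af.subtype).codRestrict (K ⊓ itComm N ⊤ c) hmem with hψ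
    have hψsurj : Function.Surjective ψ := by
      intro g
      obtain ⟨hg1, hg2⟩ := Subgroup.mem_inf.mp g.2
      have hg2' : (g : G) ∈ Subgroup.map π (itComm S ⊤ c) := by rw [hmapitS]; exact hg2
      obtain ⟨x, hxS, hxg⟩ := hg2'
      have hxT : x ∈ Tf := Subgroup.mem_comap.mpr (by rw [hxg]; exact hg1)
      exact ⟨⟨x, Subgroup.mem_inf.mpr ⟨hxT, hxS⟩⟩, Subtype.ext hxg⟩
    have hψker : ψ.ker = A'.subgroupOf Af := by
      ext x
      rw [MonoidHom.mem_ker, Subgroup.mem_subgroupOf]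
      constructor
      · intro h
        have h1 : π (x : F) = 1 := by
          have := congrArg (Subtype.val) h
          exact this
        exact Subgroup.mem_inf.mpr ⟨MonoidHom.mem_ker.mpr h1, x.2.2⟩
      · intro h
        apply Subtype.ext
        exact MonoidHom.mem_ker.mp (Subgroup.mem_inf.mp h).1
    calc Nat.card ↥(K ⊓ itComm N ⊤ c : Subgroup G)
        = Nat.card (↥Af ⧸ ψ.ker) :=
          (Nat.card_congr (QuotientGroup.quotientKerEquivOfSurjective ψ hψsurj).toEquiv).symm
      _ = Nat.card (↥Af ⧸ A'.subgroupOf Af) := by rw [hψker]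
      _ = A'.relIndex Af := (Subgroup.index_eq_card _).symm
  rw [hcard2]
  -- step 3/4/5 : identify the multiplier cards with relindexes
  have hcard3 : Nat.card (McPair π N c) = D.relIndex A' := by
    show Nat.card (↥A' ⧸ D.subgroupOf A') = D.relIndex A'
    exact (Subgroup.index_eq_card _).symm
  have hcard4 : Nat.card (McPairQuot π N K c) = Cf.relIndex Af := by
    show Nat.card (↥Af ⧸ Cf.subgroupOf Af) = Cf.relIndex Af
    exact (Subgroup.index_eq_card _).symm
  have hcard5 : Nat.card (↥Bs ⧸ D.subgroupOf Bs) = D.relIndex Bs :=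
    (Subgroup.index_eq_card _).symm
  rw [hcard3, hcard4, hcard5]
  -- step 8 : the quotient group Q and core divisibility
  haveI hBsN : Bs.Normal := Subgroup.sup_normal _ _
  set q : F →* F ⧸ Bs := QuotientGroup.mk' Bs with hq
  have hqsurj : Function.Surjective q := QuotientGroup.mk'_surjective Bs
  set ρ : (F ⧸ Bs) →* G := QuotientGroup.lift Bs π (hBsR.trans le_rfl) with hρ
  have hρq : ∀ x : F, ρ (q x) = π x := fun x => rfl
  set Tb := Tf.map q with hTb
  set Rb := π.ker.map q with hRb
  haveI hTbN : Tb.Normal := Subgroup.Normal.map hTfN q hqsurj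
  haveI hRbN : Rb.Normal := Subgroup.Normal.map (MonoidHom.normal_ker π) q hqsurj
  have hRTb : Rb ≤ Tb := Subgroup.map_mono hKerTf
  have hmemα : ∀ x : ↥Tb, (ρ.comp Tb.subtype) x ∈ K := by
    intro x
    obtain ⟨y, hy, hyx⟩ := x.2
    show ρ (x : F ⧸ Bs) ∈ K
    rw [← hyx, hρq]
    exact Subgroup.mem_comap.mp hy
  set α : ↥Tb →* ↥K := (ρ.comp Tb.subtype).codRestrict K hmemα with hα'
  have hmapTf : Subgroup.map π Tf = K := Subgroup.map_comap_eq_self_of_surjective hπ K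
  have hαsurj : Function.Surjective α := by
    intro k
    have hk : (k : G) ∈ Subgroup.map π Tf := by rw [hmapTf]; exact k.2
    obtain ⟨y, hy, hyk⟩ := hk
    refine ⟨⟨q y, Subgroup.mem_map_of_mem q hy⟩, Subtype.ext ?_⟩
    show ρ (q y) = (k : G)
    rw [hρq]; exact hyk
  have hkerα : ∀ t : ↥Tb, α t = 1 ↔ (t : F ⧸ Bs) ∈ Rb := by
    intro t
    constructor
    · intro h
      obtain ⟨y, hy, hyt⟩ := t.2
      have h1 : ρ (t : F ⧸ Bs) = 1 := congrArg Subtype.val h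
      rw [← hyt, hρq] at h1
      rw [← hyt]
      exact Subgroup.mem_map_of_mem q (MonoidHom.mem_ker.mpr h1)
    · intro h
      obtain ⟨r, hr, hrt⟩ := h
      apply Subtype.ext
      show ρ (t : F ⧸ Bs) = 1
      rw [← hrt, hρq]
      exact MonoidHom.mem_ker.mp hr
  set β : (F ⧸ Bs) →* (G ⧸ K) := (QuotientGroup.mk' K).comp ρ with hβ'
  have hρsurj : Function.Surjective ρ := by
    intro g
    obtain ⟨x, hx⟩ := hπ g
    exact ⟨q x, by rw [hρq, hx]⟩
  have hβsurj : Function.Surjective β :=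
    (QuotientGroup.mk'_surjective K).comp hρsurj
  have hkerβ : β.ker = Tb := by
    have h1 : Subgroup.comap q β.ker = Tf := by
      rw [MonoidHom.comap_ker]
      have h2 : β.comp q = (QuotientGroup.mk' K).comp π := by
        ext x; rfl
      rw [h2, ← MonoidHom.comap_ker, QuotientGroup.ker_mk']
    rw [hTb, ← h1, Subgroup.map_comap_eq_self_of_surjective hqsurj]
  have hkerq : q.ker = Bs := QuotientGroup.ker_mk' Bs
  have hRbc : itComm Rb ⊤ c = ⊥ := by
    rw [← itComm_map q hqsurj π.ker c, Subgroup.map_eq_bot_iff, hkerq]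
    exact hDBs
  have hTbc1 : itComm Tb ⊤ (c + 1) = ⊥ := by
    rw [← itComm_map q hqsurj Tf (c+1), Subgroup.map_eq_bot_iff, hkerq]
    calc itComm Tf ⊤ (c + 1) = itComm ⁅Tf, ⊤⁆ ⊤ c := itComm_succ_eq Tf ⊤ c
      _ ≤ itComm π.ker ⊤ c := itComm_mono _ hTfR c
      _ ≤ Bs := hDBs
  have hgamQ : ∀ i, 2 ≤ i → i ≤ c + 1 → gammaMixed Tb c i = ⊥ := by
    intro i h2 hi
    rw [← gammaMixed_map q hqsurj Tf c i, Subgroup.map_eq_bot_iff, hkerq]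
    calc gammaMixed Tf c i ≤ Γm := Finset.le_sup (Finset.mem_Icc.mpr ⟨h2, hi⟩)
      _ ≤ Bs := le_sup_right
  have hcore := core_dvd c Tb Rb hRTb α hαsurj hkerα β hβsurj hkerβ hRbc hTbc1 hgamQ
  have hrel : Bs.relIndex Cf = Nat.card ↥(itComm Tb ⊤ c) := by
    have h1 : Subgroup.map (QuotientGroup.mk' Bs) Cf = itComm Tb ⊤ c :=
      itComm_map (QuotientGroup.mk' Bs) hqsurj Tf c
    rw [relindex_eq_card_map Bs Cf, h1]
  have hdvdmid : Bs.relIndex Cf ∣ Nat.card (tensorPair (↥K) (G ⧸ K) c) := by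
    rw [hrel]; exact hcore
  -- step 7 : assemble
  have ht1 : D.relIndex A' * A'.relIndex Af = D.relIndex Af :=
    Subgroup.relIndex_mul_relIndex _ _ _ hDA' hA'A
  have ht2 : D.relIndex Bs * Bs.relIndex Cf = D.relIndex Cf :=
    Subgroup.relIndex_mul_relIndex _ _ _ hDBs hBsC
  have ht3 : D.relIndex Cf * Cf.relIndex Af = D.relIndex Af :=
    Subgroup.relIndex_mul_relIndex _ _ _ (hDBs.trans hBsC) hCA
  have heq : A'.relIndex Af * D.relIndex A' =
      Bs.relIndex Cf * (Cf.relIndex Af * D.relIndex Bs) := by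
    rw [mul_comm, ht1, ← ht3, ← ht2]; ring
  rw [heq]
  have heq2 : Cf.relIndex Af * Nat.card (tensorPair (↥K) (G ⧸ K) c) * D.relIndex Bs =
      Nat.card (tensorPair (↥K) (G ⧸ K) c) * (Cf.relIndex Af * D.relIndex Bs) := by ring
  rw [heq2]
  exact mul_dvd_mul hdvdmid dvd_rfl
end

section
/- Let (G,N) be a pair of finite groups which is nilpotent of class at most t, with t ≥ 2 (i.e. [N,_tG] = 1). Then |[N,_cG]| · |M^{(c)}(G,N)| divides |M^{(c)}(G/[N,G], N/[N,G])| · ∏_{i=1}^{t−1} |⊗^{c+1}([N,_iG], G/[N,_iG])|. -/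
open Subgroup

variable {F : Type*} [Group F]

theorem threeSubgroups (H K L : Subgroup F) [H.Normal] [K.Normal] [L.Normal] :
    ⁅⁅H, K⁆, L⁆ ≤ ⁅⁅K, L⁆, H⁆ ⊔ ⁅⁅L, H⁆, K⁆ := by
  set M : Subgroup F := ⁅⁅K, L⁆, H⁆ ⊔ ⁅⁅L, H⁆, K⁆ with hM
  have hMn : M.Normal := Subgroup.sup_normal _ _
  let q := QuotientGroup.mk' M
  have hker : (⁅⁅H, K⁆, L⁆).map q ≤ ⊥ := by
    rw [map_commutator, map_commutator]
    have h1 : ⁅⁅K.map q, L.map q⁆, H.map q⁆ = ⊥ := by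
      rw [← map_commutator, ← map_commutator, eq_bot_iff]
      calc (⁅⁅K, L⁆, H⁆).map q ≤ M.map q := map_mono (le_sup_left)
        _ ≤ ⊥ := by rw [le_bot_iff, Subgroup.map_eq_bot_iff, QuotientGroup.ker_mk']
    have h2 : ⁅⁅L.map q, H.map q⁆, K.map q⁆ = ⊥ := by
      rw [← map_commutator, ← map_commutator, eq_bot_iff]
      calc (⁅⁅L, H⁆, K⁆).map q ≤ M.map q := map_mono (le_sup_right)
        _ ≤ ⊥ := by rw [le_bot_iff, Subgroup.map_eq_bot_iff, QuotientGroup.ker_mk']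
    rw [Subgroup.commutator_commutator_eq_bot_of_rotate h1 h2]
  have := (map_le_iff_le_comap.mp (hker.trans bot_le : (⁅⁅H, K⁆, L⁆).map q ≤ ⊥))
  intro x hx
  have hx' := this hx
  simp only [mem_comap, mem_bot] at hx'
  have : x ∈ q.ker := by rw [MonoidHom.mem_ker]; exact hx'
  rwa [QuotientGroup.ker_mk'] at this

theorem commutator_sup_left_le (H K L : Subgroup F) [H.Normal] [K.Normal] [L.Normal] :
    ⁅H ⊔ K, L⁆ ≤ ⁅H, L⁆ ⊔ ⁅K, L⁆ := by
  set M : Subgroup F := ⁅H, L⁆ ⊔ ⁅K, L⁆ with hM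
  have hMn : M.Normal := Subgroup.sup_normal _ _
  let q := QuotientGroup.mk' M
  have hker : (⁅H ⊔ K, L⁆).map q ≤ ⊥ := by
    rw [map_commutator, Subgroup.map_sup]
    have h1 : ⁅H.map q, L.map q⁆ = ⊥ := by
      rw [← map_commutator, eq_bot_iff]
      calc (⁅H, L⁆).map q ≤ M.map q := map_mono le_sup_left
        _ ≤ ⊥ := by rw [le_bot_iff, Subgroup.map_eq_bot_iff, QuotientGroup.ker_mk']
    have h2 : ⁅K.map q, L.map q⁆ = ⊥ := by
      rw [← map_commutator, eq_bot_iff]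
      calc (⁅K, L⁆).map q ≤ M.map q := map_mono le_sup_right
        _ ≤ ⊥ := by rw [le_bot_iff, Subgroup.map_eq_bot_iff, QuotientGroup.ker_mk']
    rw [commutator_eq_bot_iff_le_centralizer] at h1 h2
    rw [le_bot_iff, commutator_eq_bot_iff_le_centralizer]
    exact sup_le h1 h2
  have := map_le_iff_le_comap.mp hker
  intro x hx
  have hx' := this hx
  simp only [mem_comap, mem_bot] at hx'
  have : x ∈ q.ker := by rw [MonoidHom.mem_ker]; exact hx'
  rwa [QuotientGroup.ker_mk'] at this

theorem commutator_sup_left (H K L : Subgroup F) [H.Normal] [K.Normal] [L.Normal] :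
    ⁅H ⊔ K, L⁆ = ⁅H, L⁆ ⊔ ⁅K, L⁆ :=
  le_antisymm (commutator_sup_left_le H K L)
    (sup_le (commutator_mono le_sup_left le_rfl) (commutator_mono le_sup_right le_rfl))

theorem commutator_sup_right (L H K : Subgroup F) [H.Normal] [K.Normal] [L.Normal] :
    ⁅L, H ⊔ K⁆ = ⁅L, H⁆ ⊔ ⁅L, K⁆ := by
  rw [commutator_comm, commutator_sup_left, commutator_comm H, commutator_comm K]

theorem commutator_sup_sup_le {A B C D M : Subgroup F} [A.Normal] [B.Normal] [C.Normal] [D.Normal]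
    (h1 : ⁅A, C⁆ ≤ M) (h2 : ⁅A, D⁆ ≤ M) (h3 : ⁅B, C⁆ ≤ M) (h4 : ⁅B, D⁆ ≤ M) :
    ⁅A ⊔ B, C ⊔ D⁆ ≤ M := by
  rw [commutator_sup_left, commutator_sup_right, commutator_sup_right]
  exact sup_le (sup_le h1 h2) (sup_le h3 h4)

/-- abbreviation -/
abbrev itF (X : Subgroup F) (k : ℕ) : Subgroup F := itComm X ⊤ k

theorem itF_succ (X : Subgroup F) (k : ℕ) : itF X (k+1) = ⁅itF X k, ⊤⁆ := rfl

theorem itF_mono {X Y : Subgroup F} (h : X ≤ Y) (k : ℕ) : itF X k ≤ itF Y k := by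
  induction k with
  | zero => exact h
  | succ k ih => exact commutator_mono ih le_rfl

theorem itF_le_self (X : Subgroup F) [X.Normal] (k : ℕ) : itF X k ≤ X := by
  induction k with
  | zero => exact le_rfl
  | succ k ih =>
    exact le_trans (commutator_le_left _ _) ih

theorem itF_succ_le (X : Subgroup F) [X.Normal] (k : ℕ) : itF X (k+1) ≤ itF X k :=
  commutator_le_left _ _

theorem itF_le_of_le {X : Subgroup F} [X.Normal] {a b : ℕ} (h : a ≤ b) : itF X b ≤ itF X a := by
  induction b with
  | zero => simp_all
  | succ b ih =>
    rcases Nat.lt_or_ge a (b+1) with hl | hg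
    · exact le_trans (itF_succ_le X b) (ih (Nat.lt_succ_iff.mp hl))
    · have : a = b + 1 := le_antisymm h hg
      subst this; exact le_rfl

theorem itF_add (X : Subgroup F) (a b : ℕ) : itF X (a + b) = itF (itF X a) b := by
  induction b with
  | zero => rfl
  | succ b ih => rw [← Nat.add_assoc, itF_succ, ih]; rfl

theorem itF_sup (A B : Subgroup F) [A.Normal] [B.Normal] (k : ℕ) :
    itF (A ⊔ B) k = itF A k ⊔ itF B k := by
  induction k with
  | zero => rfl
  | succ k ih =>
    rw [itF_succ, ih, itF_succ, itF_succ]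
    exact commutator_sup_left _ _ _

/-- The key commutator calculus lemma: `⁅[R,b F],[S,a F]⁆ ≤ [R,(a+b+1) F]`. -/
theorem keyLemma (R S : Subgroup F) [R.Normal] [S.Normal] :
    ∀ (a b : ℕ), ⁅itF R b, itF S a⁆ ≤ itF R (a + b + 1) := by
  intro a
  induction a with
  | zero =>
    intro b
    calc ⁅itF R b, itF S 0⁆ ≤ ⁅itF R b, ⊤⁆ := commutator_mono le_rfl le_top
      _ = itF R (b + 1) := rfl
      _ = itF R (0 + b + 1) := by rw [Nat.zero_add]
  | succ a ih =>
    intro b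
    have h3 : ⁅⁅itF S a, ⊤⁆, itF R b⁆ ≤ ⁅⁅(⊤ : Subgroup F), itF R b⁆, itF S a⁆ ⊔
        ⁅⁅itF R b, itF S a⁆, ⊤⁆ := threeSubgroups _ _ _
    have e1 : ⁅⁅(⊤ : Subgroup F), itF R b⁆, itF S a⁆ ≤ itF R (a + (b+1) + 1) := by
      rw [commutator_comm (⊤ : Subgroup F)]
      exact ih (b+1)
    have e2 : ⁅⁅itF R b, itF S a⁆, ⊤⁆ ≤ itF R (a + b + 2) := by
      calc ⁅⁅itF R b, itF S a⁆, ⊤⁆ ≤ ⁅itF R (a + b + 1), ⊤⁆ := commutator_mono (ih b) le_rfl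
        _ = itF R (a + b + 2) := rfl
    calc ⁅itF R b, itF S (a+1)⁆ = ⁅⁅itF S a, ⊤⁆, itF R b⁆ := by
          rw [commutator_comm]; rfl
      _ ≤ _ := h3
      _ ≤ itF R (a + 1 + b + 1) := by
          apply sup_le
          · refine le_trans e1 ?_
            apply itF_le_of_le; omega
          · refine le_trans e2 ?_
            apply itF_le_of_le; omega

-- element identities
open scoped commutatorElement
variable {Fg : Type*} [Group Fg]

theorem id_mul_left (a b f : Fg) :
    ⁅a*b,f⁆⁻¹ * (⁅a,f⁆*⁅b,f⁆) =
      (⁅a,f⁆⁻¹ * ⁅a,⁅b,f⁆⁻¹⁆ * ⁅a,f⁆) * ⁅⁅a,f⁆⁻¹,⁅b,f⁆⁻¹⁆ := by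
  simp only [commutatorElement_def]
  group

theorem id_mul_right (a f g : Fg) :
    ⁅a,f*g⁆⁻¹ * (⁅a,f⁆*⁅a,g⁆) = ⁅f,⁅a,g⁆⁻¹⁆ := by
  simp only [commutatorElement_def]
  group

open Subgroup

theorem card_dvd_of_addHom_surj {A B : Type*} [AddGroup A] [AddGroup B] (f : A →+ B)
    (hf : Function.Surjective f) : Nat.card B ∣ Nat.card A := by
  have e := QuotientAddGroup.quotientKerEquivOfSurjective f hf
  rw [← Nat.card_congr e.toEquiv]
  exact AddSubgroup.card_quotient_dvd_card _

section PartTwo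

variable {F G : Type} [Group F] [Group G] (π : F →* G) (N : Subgroup G) [N.Normal]

/-- `T i = π⁻¹([N,_i G])`. -/
def TT (i : ℕ) : Subgroup F := (itComm N ⊤ i).comap π

instance TT_normal (i : ℕ) : (TT π N i).Normal := Subgroup.Normal.comap (itComm_normal _ _ _) π

variable (m : ℕ)

def HH (k : ℕ) : Subgroup F := itF (TT π N m) k
def WW (k : ℕ) : Subgroup F := itF (TT π N (m+1)) k

instance HH_normal (k : ℕ) : (HH π N m k).Normal := itComm_normal _ _ _
instance WW_normal (k : ℕ) : (WW π N m k).Normal := itComm_normal _ _ _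

theorem WW_le_HH (k : ℕ) : WW π N m k ≤ HH π N m k :=
  itF_mono (comap_mono (itF_succ_le N m)) k

theorem HH_succ (k : ℕ) : HH π N m (k+1) = ⁅HH π N m k, ⊤⁆ := rfl
theorem WW_succ (k : ℕ) : WW π N m (k+1) = ⁅WW π N m k, ⊤⁆ := rfl

theorem comm_TT_top_le : ⁅TT π N m, ⊤⁆ ≤ TT π N (m+1) := by
  show _ ≤ comap π (itComm N ⊤ (m+1))
  rw [← map_le_iff_le_comap, map_commutator]
  calc ⁅(comap π (itComm N ⊤ m)).map π, (⊤ : Subgroup F).map π⁆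
      ≤ ⁅itComm N ⊤ m, ⊤⁆ := commutator_mono (map_comap_le _ _) le_top
    _ = itComm N ⊤ (m+1) := rfl

theorem HH_two_le_WW' (k : ℕ) : HH π N m (k+2) ≤ WW π N m (k+1) := by
  have h1 : HH π N m (k+2) = itF (itF (TT π N m) 1) (k+1) := by
    rw [HH, ← itF_add]
    congr 1
    omega
  rw [h1]
  exact itF_mono (comm_TT_top_le π N m) (k+1)

theorem comm_HH_HH_le_WW' (k : ℕ) : ⁅HH π N m k, HH π N m k⁆ ≤ WW π N m k := by
  cases k with
  | zero =>
    show ⁅TT π N m, TT π N m⁆ ≤ TT π N (m+1)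
    exact le_trans (commutator_mono le_rfl le_top) (comm_TT_top_le π N m)
  | succ k =>
    exact le_trans (commutator_mono le_rfl le_top) (HH_two_le_WW' π N m k)

theorem mem_WW_of_right {k : ℕ} {x y : F} (hy : y ∈ HH π N m (k+1)) :
    ⁅x, y⁆ ∈ WW π N m (k+1) := by
  apply HH_two_le_WW' π N m k
  show ⁅x, y⁆ ∈ HH π N m (k+2)
  rw [HH_succ, commutator_comm]
  exact commutator_mem_commutator (mem_top x) hy

theorem map_itF_comap (hπ : Function.Surjective π) (i : ℕ) : (itF (N.comap π) i).map π = itComm N ⊤ i := by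
  induction i with
  | zero => exact map_comap_eq_self_of_surjective hπ N
  | succ i ih =>
    rw [itF_succ, map_commutator, ih, Subgroup.map_top_of_surjective π hπ]
    rfl

theorem TT_decomp (hπ : Function.Surjective π) (i : ℕ) : TT π N i = itF (N.comap π) i ⊔ π.ker := by
  rw [TT, ← map_itF_comap π N hπ i, comap_map_eq]

theorem HH_decomp (hπ : Function.Surjective π) (k : ℕ) :
    HH π N m k = itF (N.comap π) (m + k) ⊔ itF π.ker k := by
  rw [HH, TT_decomp π N hπ m, itF_sup, ← itF_add]

theorem WW_decomp (hπ : Function.Surjective π) (k : ℕ) :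
    WW π N m k = itF (N.comap π) (m + 1 + k) ⊔ itF π.ker k := by
  rw [WW, TT_decomp π N hπ (m+1), itF_sup, ← itF_add]

theorem ker_le_TT (i : ℕ) : π.ker ≤ TT π N i := by
  rw [← MonoidHom.comap_bot π]; exact comap_mono bot_le

theorem comm_HH_TT_le_WW (hπ : Function.Surjective π) (hm : 1 ≤ m) (k : ℕ) :
    ⁅HH π N m k, TT π N m⁆ ≤ WW π N m (k+1) := by
  set S := N.comap π
  set R := π.ker
  have hS : S.Normal := Subgroup.Normal.comap inferInstance π
  have hR : R.Normal := MonoidHom.normal_ker π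
  rw [HH_decomp π N m hπ, TT_decomp π N hπ m, WW_decomp π N m hπ]
  haveI : (itF S (m+k)).Normal := itComm_normal _ _ _
  haveI : (itF S m).Normal := itComm_normal _ _ _
  haveI : (itF R k).Normal := itComm_normal _ _ _
  apply commutator_sup_sup_le
  · refine le_trans (keyLemma S S m (m+k)) (le_trans (itF_le_of_le (by omega)) le_sup_left)
  · refine le_trans (le_of_eq (commutator_comm _ _)) ?_
    refine le_trans (keyLemma R S (m+k) 0) (le_trans (itF_le_of_le (by omega)) le_sup_right)
  · refine le_trans (keyLemma R S m k) (le_trans (itF_le_of_le (by omega)) le_sup_right)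
  · refine le_trans (keyLemma R R 0 k) (le_trans (itF_le_of_le (by omega)) le_sup_right)


/-- The `k`-th layer quotient `[T_m,_k F]/[T_{m+1},_k F]`. -/
def Qk (k : ℕ) : Type :=
  HH π N m k ⧸ (WW π N m k).subgroupOf (HH π N m k)

instance QkGroup (k : ℕ) : Group (Qk π N m k) :=
  inferInstanceAs (Group (HH π N m k ⧸ (WW π N m k).subgroupOf (HH π N m k)))

instance QkComm (k : ℕ) : CommGroup (Qk π N m k) :=
  { QkGroup π N m k with
    mul_comm := by
      intro a b
      induction a using QuotientGroup.induction_on with | H a =>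
      induction b using QuotientGroup.induction_on with | H b =>
      show QuotientGroup.mk (a * b) = QuotientGroup.mk (b * a)
      rw [QuotientGroup.eq]
      rw [mem_subgroupOf]
      have heq : (((a * b)⁻¹ * (b * a) : HH π N m k) : F) = ⁅(b:F)⁻¹, (a:F)⁻¹⁆ := by
        push_cast
        simp [commutatorElement_def]
        group
      rw [heq]
      exact comm_HH_HH_le_WW' π N m k
        (commutator_mem_commutator (inv_mem b.2) (inv_mem a.2)) }

theorem mem_HH_succ (k : ℕ) {a : F} (ha : a ∈ HH π N m k) (f : F) :
    ⁅a, f⁆ ∈ HH π N m (k+1) :=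
  commutator_mem_commutator ha (mem_top f)

/-- the commutator-with-`f` map `H_k → Q_{k+1}`. -/
def chi (k : ℕ) (f : F) : HH π N m k →* Qk π N m (k+1) :=
  MonoidHom.mk' (fun a => QuotientGroup.mk ⟨⁅(a : F), f⁆, mem_HH_succ π N m k a.2 f⟩)
    (by
      intro a b
      show QuotientGroup.mk _ = QuotientGroup.mk (⟨⁅(a:F),f⁆,_⟩ * ⟨⁅(b:F),f⁆,_⟩ : HH π N m (k+1))
      rw [QuotientGroup.eq, mem_subgroupOf]
      have hcoe : ((((⟨⁅((a*b : HH π N m k) : F), f⁆, mem_HH_succ π N m k (a*b).2 f⟩ : HH π N m (k+1)))⁻¹ *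
          (⟨⁅(a:F),f⁆, mem_HH_succ π N m k a.2 f⟩ * ⟨⁅(b:F),f⁆, mem_HH_succ π N m k b.2 f⟩)
            : HH π N m (k+1)) : F) =
          ⁅(a:F)*(b:F), f⁆⁻¹ * (⁅(a:F),f⁆ * ⁅(b:F),f⁆) := by
        push_cast
        rfl
      rw [hcoe, id_mul_left]
      apply mul_mem
      · have hc : ⁅(a:F), ⁅(b:F),f⁆⁻¹⁆ ∈ WW π N m (k+1) :=
          mem_WW_of_right π N m (inv_mem (mem_HH_succ π N m k b.2 f))
        have := (WW_normal π N m (k+1)).conj_mem _ hc ⁅(a:F),f⁆⁻¹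
        simpa using this
      · exact mem_WW_of_right π N m (inv_mem (mem_HH_succ π N m k b.2 f)))

theorem chi_apply (k : ℕ) (f : F) (a : HH π N m k) :
    chi π N m k f a = QuotientGroup.mk ⟨⁅(a : F), f⁆, mem_HH_succ π N m k a.2 f⟩ := rfl

/-- `chi` descends to `Q_k`. -/
def psi (k : ℕ) (f : F) : Qk π N m k →* Qk π N m (k+1) :=
  QuotientGroup.lift _ (chi π N m k f) (by
    intro w hw
    rw [MonoidHom.mem_ker, chi_apply]
    erw [QuotientGroup.eq_one_iff]
    rw [mem_subgroupOf]
    show ⁅(w : F), f⁆ ∈ WW π N m (k+1)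
    rw [WW_succ]
    exact commutator_mem_commutator (mem_subgroupOf.mp hw) (mem_top f))

theorem psi_apply (k : ℕ) (f : F) (a : HH π N m k) :
    psi π N m k f (QuotientGroup.mk a) =
      QuotientGroup.mk ⟨⁅(a : F), f⁆, mem_HH_succ π N m k a.2 f⟩ := rfl

/-- `f ↦ psi f` is a homomorphism from `F` to the (commutative) group of homs. -/
def Phi (k : ℕ) : F →* (Qk π N m k →* Qk π N m (k+1)) :=
  MonoidHom.mk' (fun f => psi π N m k f) (by
    intro f g
    ext a
    induction a using QuotientGroup.induction_on with | H a =>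
    show psi π N m k (f*g) (QuotientGroup.mk a) =
      psi π N m k f (QuotientGroup.mk a) * psi π N m k g (QuotientGroup.mk a)
    rw [psi_apply, psi_apply, psi_apply]
    show QuotientGroup.mk _ = QuotientGroup.mk (⟨⁅(a:F),f⁆,_⟩ * ⟨⁅(a:F),g⁆,_⟩ : HH π N m (k+1))
    rw [QuotientGroup.eq, mem_subgroupOf]
    have hcoe : ((((⟨⁅(a : F), f*g⁆, mem_HH_succ π N m k a.2 (f*g)⟩ : HH π N m (k+1)))⁻¹ *
        (⟨⁅(a:F),f⁆, mem_HH_succ π N m k a.2 f⟩ * ⟨⁅(a:F),g⁆, mem_HH_succ π N m k a.2 g⟩)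
          : HH π N m (k+1)) : F) =
        ⁅(a:F), f*g⁆⁻¹ * (⁅(a:F),f⁆ * ⁅(a:F),g⁆) := by
      push_cast
      rfl
    rw [hcoe, id_mul_right]
    exact mem_WW_of_right π N m (inv_mem (mem_HH_succ π N m k a.2 g)))

theorem Phi_apply (k : ℕ) (f : F) : Phi π N m k f = psi π N m k f := rfl

theorem Phi_kills_TT (hπ : Function.Surjective π) (hm : 1 ≤ m) (k : ℕ) {u : F}
    (hu : u ∈ TT π N m) : Phi π N m k u = 1 := by
  ext a
  induction a using QuotientGroup.induction_on with | H a =>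
  show psi π N m k u (QuotientGroup.mk a) = 1
  rw [psi_apply]
  erw [QuotientGroup.eq_one_iff]
  rw [mem_subgroupOf]
  exact comm_HH_TT_le_WW π N m hπ hm k (commutator_mem_commutator a.2 hu)

theorem ker_le_Phi_ker (hπ : Function.Surjective π) (hm : 1 ≤ m) (k : ℕ) :
    π.ker ≤ (Phi π N m k).ker := fun x hx =>
  MonoidHom.mem_ker.mpr (Phi_kills_TT π N m hπ hm k (ker_le_TT π N m hx))

/-- `Phi` descended to `G`. -/
noncomputable def Phi1 (hπ : Function.Surjective π) (hm : 1 ≤ m) (k : ℕ) :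
    G →* (Qk π N m k →* Qk π N m (k+1)) :=
  (π.liftOfSurjective hπ) ⟨Phi π N m k, ker_le_Phi_ker π N m hπ hm k⟩

theorem Phi1_eq (hπ : Function.Surjective π) (hm : 1 ≤ m) (k : ℕ) (x : F) :
    Phi1 π N m hπ hm k (π x) = Phi π N m k x :=
  MonoidHom.liftOfRightInverse_comp_apply _ _ _ _ _

theorem Phi1_kills (hπ : Function.Surjective π) (hm : 1 ≤ m) (k : ℕ) :
    itComm N ⊤ m ≤ (Phi1 π N m hπ hm k).ker := by
  intro n hn
  obtain ⟨u, hu⟩ := hπ n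
  rw [MonoidHom.mem_ker, ← hu, Phi1_eq]
  exact Phi_kills_TT π N m hπ hm k (mem_comap.mpr (hu ▸ hn))

/-- `Phi` descended to `G ⧸ [N,_m G]`. -/
noncomputable def Phi2 (hπ : Function.Surjective π) (hm : 1 ≤ m) (k : ℕ) :
    G ⧸ itComm N ⊤ m →* (Qk π N m k →* Qk π N m (k+1)) :=
  QuotientGroup.lift (itComm N ⊤ m) (Phi1 π N m hπ hm k) (Phi1_kills π N m hπ hm k)

/-- `Phi` descended to the abelianization of `G ⧸ [N,_m G]`. -/
noncomputable def Phi3 (hπ : Function.Surjective π) (hm : 1 ≤ m) (k : ℕ) :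
    Abelianization (G ⧸ itComm N ⊤ m) →* (Qk π N m k →* Qk π N m (k+1)) :=
  Abelianization.lift (Phi2 π N m hπ hm k)

theorem Phi3_eq (hπ : Function.Surjective π) (hm : 1 ≤ m) (k : ℕ) (f : F) :
    Phi3 π N m hπ hm k (Abelianization.of (QuotientGroup.mk (π f))) = psi π N m k f := by
  show Phi2 π N m hπ hm k (QuotientGroup.mk (π f)) = psi π N m k f
  show Phi1 π N m hπ hm k (π f) = psi π N m k f
  rw [Phi1_eq]
  rfl

/-- the projection `T_m → N_m`. -/
def e0 : TT π N m →* itComm N ⊤ m :=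
  (π.comp (TT π N m).subtype).codRestrict _ (fun x => x.2)

theorem e0_surj (hπ : Function.Surjective π) : Function.Surjective (e0 π N m) := by
  rintro ⟨n, hn⟩
  obtain ⟨u, hu⟩ := hπ n
  exact ⟨⟨u, mem_comap.mpr (hu ▸ hn)⟩, Subtype.ext hu⟩

theorem e0_ker_le : (e0 π N m).ker ≤ (QuotientGroup.mk' ((WW π N m 0).subgroupOf (HH π N m 0))).ker := by
  intro x hx
  rw [MonoidHom.mem_ker] at hx
  have hx' : π (x : F) = 1 := congrArg Subtype.val hx
  rw [QuotientGroup.ker_mk']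
  show (x : F) ∈ WW π N m 0
  exact ker_le_TT π N (m+1) (MonoidHom.mem_ker.mpr hx')

/-- base map `N_m → Q_0`. -/
noncomputable def theta0 (hπ : Function.Surjective π) : itComm N ⊤ m →* Qk π N m 0 :=
  ((e0 π N m).liftOfSurjective (e0_surj π N m hπ)) ⟨QuotientGroup.mk' ((WW π N m 0).subgroupOf (HH π N m 0)), e0_ker_le π N m⟩

theorem theta0_eq (hπ : Function.Surjective π) (x : TT π N m) :
    theta0 π N m hπ (e0 π N m x) = QuotientGroup.mk x :=
  MonoidHom.liftOfRightInverse_comp_apply _ _ _ _ _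

theorem theta0_surj (hπ : Function.Surjective π) : Function.Surjective (theta0 π N m hπ) := by
  intro q
  induction q using QuotientGroup.induction_on with | H a =>
  exact ⟨e0 π N m a, theta0_eq π N m hπ a⟩

/-- base map from the abelianization. -/
noncomputable def theta0ab (hπ : Function.Surjective π) :
    Abelianization (itComm N ⊤ m) →* Qk π N m 0 :=
  Abelianization.lift (theta0 π N m hπ)

theorem theta0ab_surj (hπ : Function.Surjective π) :
    Function.Surjective (theta0ab π N m hπ) := by
  intro q
  obtain ⟨x, hx⟩ := theta0_surj π N m hπ q
  exact ⟨Abelianization.of x, hx⟩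

/-- The bilinear pairing data, as a linear map out of the abelianization. -/
noncomputable def outerLin (hπ : Function.Surjective π) (hm : 1 ≤ m) (k : ℕ) :
    AbOf (G ⧸ itComm N ⊤ m) →ₗ[ℤ]
      (Additive (Qk π N m k) →ₗ[ℤ] Additive (Qk π N m (k+1))) :=
  AddMonoidHom.toIntLinearMap
    (AddMonoidHom.mk' (fun b =>
      (MonoidHom.toAdditive (Phi3 π N m hπ hm k b.toMul)).toIntLinearMap)
      (by
        intro b b'
        ext x
        change Additive.ofMul
            ((Phi3 π N m hπ hm k (Additive.toMul b * Additive.toMul b')) (Additive.toMul x)) =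
          Additive.ofMul ((Phi3 π N m hπ hm k (Additive.toMul b)) (Additive.toMul x) *
            (Phi3 π N m hπ hm k (Additive.toMul b')) (Additive.toMul x))
        rw [map_mul]
        rfl))

theorem outerLin_apply (hπ : Function.Surjective π) (hm : 1 ≤ m) (k : ℕ)
    (b : AbOf (G ⧸ itComm N ⊤ m)) (x : Additive (Qk π N m k)) :
    outerLin π N m hπ hm k b x =
      Additive.ofMul ((Phi3 π N m hπ hm k b.toMul) x.toMul) := rfl

/-- one tensor step `Q_k ⊗ B → Q_{k+1}`. -/
noncomputable def stepLin (hπ : Function.Surjective π) (hm : 1 ≤ m) (k : ℕ) :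
    TensorProduct ℤ (Additive (Qk π N m k)) (AbOf (G ⧸ itComm N ⊤ m)) →ₗ[ℤ]
      Additive (Qk π N m (k+1)) :=
  TensorProduct.lift (outerLin π N m hπ hm k).flip

theorem stepLin_surj (hπ : Function.Surjective π) (hm : 1 ≤ m) (k : ℕ) :
    Function.Surjective (stepLin π N m hπ hm k) := by
  have main : ∀ z ∈ ⁅HH π N m k, (⊤ : Subgroup F)⁆, ∀ hz : z ∈ HH π N m (k+1),
      ∃ x, stepLin π N m hπ hm k x = Additive.ofMul (QuotientGroup.mk ⟨z, hz⟩ : Qk π N m (k+1)) := by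
    intro z hzc
    induction hzc using Subgroup.closure_induction with
    | mem x hx =>
      obtain ⟨a, ha, f, -, rfl⟩ := hx
      intro hz
      refine ⟨TensorProduct.tmul ℤ (Additive.ofMul (QuotientGroup.mk ⟨a, ha⟩ : Qk π N m k))
        (Additive.ofMul (Abelianization.of (QuotientGroup.mk (π f)))), ?_⟩
      rw [stepLin]
      erw [TensorProduct.lift.tmul]
      rw [LinearMap.flip_apply, outerLin_apply]
      show Additive.ofMul ((Phi3 π N m hπ hm k (Abelianization.of (QuotientGroup.mk (π f))))
          (QuotientGroup.mk ⟨a, ha⟩ : Qk π N m k)) = _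
      rw [Phi3_eq, psi_apply]
      rfl
    | one =>
      intro hz
      refine ⟨0, ?_⟩
      rw [map_zero]
      have : (⟨(1:F), hz⟩ : HH π N m (k+1)) = 1 := rfl
      rw [this, QuotientGroup.mk_one]
      rfl
    | mul x y hx hy px py =>
      intro hz
      obtain ⟨u, hu⟩ := px hx
      obtain ⟨v, hv⟩ := py hy
      refine ⟨u + v, ?_⟩
      rw [map_add, hu, hv]
      rfl
    | inv x hx px =>
      intro hz
      obtain ⟨u, hu⟩ := px hx
      refine ⟨-u, ?_⟩
      rw [map_neg, hu]
      rfl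
  intro y
  obtain ⟨a, ha⟩ := QuotientGroup.mk_surjective (Additive.toMul y : HH π N m (k+1) ⧸ _)
  obtain ⟨x, hx⟩ := main (a : F) (by rw [← HH_succ]; exact a.2) a.2
  refine ⟨x, ?_⟩
  rw [hx]
  have : (⟨(a : F), a.2⟩ : HH π N m (k+1)) = a := rfl
  rw [this, ha]
  rfl

/-- The full map `⊗^{k+1}(N_m, G/N_m) → Q_k`. -/
noncomputable def theta (hπ : Function.Surjective π) (hm : 1 ≤ m) :
    ∀ (k : ℕ), (iterTensor (ModuleCat.of ℤ (AbOf ↥(itComm N ⊤ m)))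
        (ModuleCat.of ℤ (AbOf (G ⧸ itComm N ⊤ m))) k : Type) →ₗ[ℤ] Additive (Qk π N m k)
  | 0 => (MonoidHom.toAdditive (theta0ab π N m hπ)).toIntLinearMap
  | (k+1) => (stepLin π N m hπ hm k).comp
      (TensorProduct.map (theta hπ hm k)
        (LinearMap.id (R := ℤ) (M := AbOf (G ⧸ itComm N ⊤ m)))).toAddMonoidHom.toIntLinearMap

theorem theta_surj (hπ : Function.Surjective π) (hm : 1 ≤ m) (k : ℕ) :
    Function.Surjective (theta π N m hπ hm k) := by
  induction k with
  | zero =>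
    intro y
    obtain ⟨x, hx⟩ := theta0ab_surj π N m hπ (Additive.toMul y)
    exact ⟨Additive.ofMul x, congrArg Additive.ofMul hx⟩
  | succ k ih =>
    have hmap : Function.Surjective
        (TensorProduct.map (theta π N m hπ hm k)
          (LinearMap.id (R := ℤ) (M := AbOf (G ⧸ itComm N ⊤ m)))) :=
      TensorProduct.map_surjective ih Function.surjective_id
    show Function.Surjective ⇑((stepLin π N m hπ hm k).comp
      (TensorProduct.map (theta π N m hπ hm k)
        (LinearMap.id (R := ℤ) (M := AbOf (G ⧸ itComm N ⊤ m)))).toAddMonoidHom.toIntLinearMap)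
    rw [LinearMap.coe_comp]
    exact Function.Surjective.comp (stepLin_surj π N m hπ hm k) hmap

theorem relindex_dvd_tensor (hπ : Function.Surjective π) (hm : 1 ≤ m) (c : ℕ) :
    (WW π N m c).relIndex (HH π N m c) ∣
      Nat.card (tensorPair (↥(itComm N ⊤ m)) (G ⧸ itComm N ⊤ m) c) := by
  have h1 : Nat.card (Additive (Qk π N m c)) ∣
      Nat.card (iterTensor (ModuleCat.of ℤ (AbOf ↥(itComm N ⊤ m)))
        (ModuleCat.of ℤ (AbOf (G ⧸ itComm N ⊤ m))) c : Type) :=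
    card_dvd_of_addHom_surj (theta π N m hπ hm c).toAddMonoidHom (theta_surj π N m hπ hm c)
  have h2 : Nat.card (Additive (Qk π N m c)) = Nat.card (Qk π N m c) :=
    Nat.card_congr Additive.toMul
  have h3 : (WW π N m c).relIndex (HH π N m c) = Nat.card (Qk π N m c) := rfl
  rw [h3, ← h2]
  exact h1

theorem card_map_eq_relindex (K : Subgroup F) : Nat.card (K.map π) = π.ker.relIndex K := by
  have hrange : (π.comp K.subtype).range = K.map π := by
    rw [MonoidHom.range_comp, Subgroup.range_subtype]
  have hker : (π.comp K.subtype).ker = π.ker.subgroupOf K := by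
    ext x
    simp [MonoidHom.mem_ker, mem_subgroupOf]
  calc Nat.card (K.map π) = Nat.card (π.comp K.subtype).range := by rw [hrange]
    _ = Nat.card (K ⧸ (π.comp K.subtype).ker) :=
        (Nat.card_congr (QuotientGroup.quotientKerEquivRange (π.comp K.subtype)).toEquiv).symm
    _ = π.ker.relIndex K := by rw [hker]; rfl

theorem HH_anti {i j : ℕ} (hij : i ≤ j) (k : ℕ) : HH π N j k ≤ HH π N i k :=
  itF_mono (comap_mono (itF_le_of_le hij)) k

theorem telescope_general (k : ℕ) :
    ∀ n, 1 ≤ n → (HH π N n k).relIndex (HH π N 1 k) =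
      ∏ i ∈ Finset.Icc 1 (n-1), (HH π N (i+1) k).relIndex (HH π N i k) := by
  intro n
  induction n with
  | zero => omega
  | succ n ih =>
    intro _
    rcases Nat.lt_or_ge n 1 with hn | hn
    · interval_cases n
      simp [relIndex_self]
    · have h1 : (HH π N (n+1) k).relIndex (HH π N n k) * (HH π N n k).relIndex (HH π N 1 k)
          = (HH π N (n+1) k).relIndex (HH π N 1 k) :=
        relIndex_mul_relIndex _ _ _ (HH_anti π N (by omega) k) (HH_anti π N hn k)
      rw [← h1, ih hn]
      have h2 : n + 1 - 1 = (n-1) + 1 := by omega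
      rw [h2, Finset.prod_Icc_succ_top (by omega)]
      have h3 : n - 1 + 1 = n := by omega
      rw [h3, mul_comm]

theorem HH_t_eq (t : ℕ) (hnil : itComm N ⊤ t = ⊥) (k : ℕ) :
    HH π N t k = itComm π.ker ⊤ k := by
  unfold HH TT
  rw [hnil, MonoidHom.comap_bot]

end PartTwo


section Main

theorem card_multiplier_dvd_of_nilpotent_class_le' {G : Type} [Group G] [Finite G]
    {F : Type} [Group F] (π : F →* G) (hπ : Function.Surjective π)
    (N : Subgroup G) [N.Normal] (c t : ℕ) (hc : 1 ≤ c) (ht : 2 ≤ t)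
    (hnil : itComm N ⊤ t = ⊥) :
    Nat.card (itComm N ⊤ c) * Nat.card (McPair π N c) ∣
      Nat.card (McPairQuot π N (itComm N ⊤ 1) c) *
        ∏ i ∈ Finset.Icc 1 (t - 1), Nat.card (tensorPair (itComm N ⊤ i) (G ⧸ itComm N ⊤ i) c) := by
  have hSn : (N.comap π).Normal := Subgroup.Normal.comap inferInstance π
  have hRn : (π.ker).Normal := MonoidHom.normal_ker π
  -- LHS
  have hMc : Nat.card (McPair π N c) =
      (itComm π.ker ⊤ c).relIndex (π.ker ⊓ itComm (N.comap π) ⊤ c) := rfl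
  have hNc : Nat.card (itComm N ⊤ c) =
      (π.ker ⊓ itComm (N.comap π) ⊤ c).relIndex (itComm (N.comap π) ⊤ c) := by
    rw [inf_relIndex_right, ← card_map_eq_relindex π (itComm (N.comap π) ⊤ c),
      map_itF_comap π N hπ c]
  have chain1 : itComm π.ker ⊤ c ≤ π.ker ⊓ itComm (N.comap π) ⊤ c :=
    le_inf (itF_le_self π.ker c) (itF_mono (fun x hx => mem_comap.mpr (by
      rw [MonoidHom.mem_ker.mp hx]; exact one_mem N)) c)
  have hLHS : Nat.card (itComm N ⊤ c) * Nat.card (McPair π N c) =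
      (itComm π.ker ⊤ c).relIndex (itComm (N.comap π) ⊤ c) := by
    rw [hMc, hNc, mul_comm]
    exact relIndex_mul_relIndex _ _ _ chain1 inf_le_right
  -- SA ≤ T_1
  have hSAle : itComm (N.comap π) ⊤ c ≤ (itComm N ⊤ 1).comap π := by
    have h1 : itComm (N.comap π) ⊤ c ≤ itComm (N.comap π) ⊤ 1 := itF_le_of_le hc
    refine le_trans h1 ?_
    rw [← map_le_iff_le_comap]
    show Subgroup.map π ⁅N.comap π, ⊤⁆ ≤ ⁅N, ⊤⁆
    rw [map_commutator]
    exact commutator_mono (map_comap_le _ _) le_top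
  -- McPairQuot
  have hMQ : Nat.card (McPairQuot π N (itComm N ⊤ 1) c) =
      (HH π N 1 c).relIndex (itComm (N.comap π) ⊤ c) := by
    have h0 : Nat.card (McPairQuot π N (itComm N ⊤ 1) c)
        = (itComm ((itComm N ⊤ 1).comap π) ⊤ c).relIndex
            ((itComm N ⊤ 1).comap π ⊓ itComm (N.comap π) ⊤ c) := rfl
    rw [h0, inf_eq_right.mpr hSAle]
    rfl
  -- chains for middle splitting
  have hRATA : itComm π.ker ⊤ c ≤ HH π N 1 c := by
    rw [← HH_t_eq π N t hnil c]
    exact HH_anti π N (by omega) c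
  have hTASA : HH π N 1 c ≤ itComm (N.comap π) ⊤ c := by
    refine itF_mono ?_ c
    refine comap_mono ?_
    exact commutator_le_left N ⊤
  have hsplit : (itComm π.ker ⊤ c).relIndex (HH π N 1 c) *
      (HH π N 1 c).relIndex (itComm (N.comap π) ⊤ c) =
      (itComm π.ker ⊤ c).relIndex (itComm (N.comap π) ⊤ c) :=
    relIndex_mul_relIndex _ _ _ hRATA hTASA
  -- telescoping
  have htel : (itComm π.ker ⊤ c).relIndex (HH π N 1 c) =
      ∏ i ∈ Finset.Icc 1 (t-1), (HH π N (i+1) c).relIndex (HH π N i c) := by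
    rw [← HH_t_eq π N t hnil c]
    exact telescope_general π N c t (by omega)
  -- divisibility of each factor
  have hfac : ∀ i ∈ Finset.Icc 1 (t-1), (HH π N (i+1) c).relIndex (HH π N i c) ∣
      Nat.card (tensorPair (itComm N ⊤ i) (G ⧸ itComm N ⊤ i) c) := by
    intro i hi
    have hi1 : 1 ≤ i := (Finset.mem_Icc.mp hi).1
    exact relindex_dvd_tensor π N i hπ hi1 c
  have hproddvd : (itComm π.ker ⊤ c).relIndex (HH π N 1 c) ∣
      ∏ i ∈ Finset.Icc 1 (t-1), Nat.card (tensorPair (itComm N ⊤ i) (G ⧸ itComm N ⊤ i) c) := by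
    rw [htel]
    exact Finset.prod_dvd_prod_of_dvd _ _ hfac
  rw [hLHS, ← hsplit, mul_comm ((itComm π.ker ⊤ c).relIndex (HH π N 1 c))]
  rw [hMQ]
  exact mul_dvd_mul_left _ hproddvd

end Main

/-- Let `(G,N)` be a pair of finite groups which is nilpotent of class at most `t`, `t ≥ 2`
(`[N,_t G] = 1`), and `π : F ↠ G` a free presentation.  Then
`|[N,_c G]| · |M^{(c)}(G,N)|` divides
`|M^{(c)}(G/[N,G], N/[N,G])| · ∏_{i=1}^{t−1} |⊗^{c+1}([N,_i G], G/[N,_i G])|`. -/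
theorem card_multiplier_dvd_of_nilpotent_class_le {G : Type} [Group G] [Finite G]
    {F : Type} [Group F] [IsFreeGroup F] (π : F →* G) (hπ : Function.Surjective π)
    (N : Subgroup G) [N.Normal] (c t : ℕ) (hc : 1 ≤ c) (ht : 2 ≤ t)
    (hnil : itComm N ⊤ t = ⊥) :
    Nat.card (itComm N ⊤ c) * Nat.card (McPair π N c) ∣
      Nat.card (McPairQuot π N (itComm N ⊤ 1) c) *
        ∏ i ∈ Finset.Icc 1 (t - 1), Nat.card (tensorPair (itComm N ⊤ i) (G ⧸ itComm N ⊤ i) c) :=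
  card_multiplier_dvd_of_nilpotent_class_le' π hπ N c t hc ht hnil
end
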